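/- arXiv:2402.18984 — 10 statements merged into one kernel-verified Lean document; each statement's English description precedes it below -/
import Mathlib

section
/- Let k ≥ 2 be an integer and let G be a finite connected P_k-free simple graph on n vertices. If k < 2⌈√n⌉ − 1, then b(G) ≤ ⌈√n⌉ (that is, the burning number conjecture holds for G). -/
open SimpleGraph

/-- `b` is a burning sequence of length `k` for `G`: the source `b i` is burned at time `i + 1`
(for `i : Fin k`), and every vertex must be within distance `k - (i + 1)` of some source `b i`
(expressed via the existence of a short enough walk, so that unreachable vertices are never
considered burned). -/
def IsBurningSeq {V : Type*} (G : SimpleGraph V) {k : ℕ} (b : Fin k → V) : Prop :=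
  ∀ v : V, ∃ i : Fin k, ∃ w : G.Walk v (b i), w.length + (i : ℕ) + 1 ≤ k

/-- The burning number of `G`: the least `k` admitting a burning sequence of length `k`. -/
noncomputable def burningNumber {V : Type*} (G : SimpleGraph V) : ℕ :=
  sInf {k : ℕ | ∃ b : Fin k → V, IsBurningSeq G b}

section Aux


variable {V : Type*} {G : SimpleGraph V}

private lemma adj_dist_le_one {a b : V} (h : G.Adj a b) : G.dist a b ≤ 1 := by
  have := G.dist_le (Walk.cons h Walk.nil)
  simpa using this

private lemma dist_getVert_le (hconn : G.Connected) {a b : V} (p : G.Walk a b) :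
    ∀ {i j : ℕ}, i ≤ j → G.dist (p.getVert i) (p.getVert j) ≤ j - i := by
  intro i j hij
  induction j with
  | zero =>
    have : i = 0 := Nat.le_zero.mp hij
    subst this; simp [SimpleGraph.dist_self]
  | succ j ih =>
    rcases Nat.lt_or_ge i (j+1) with h | h
    · have hij' : i ≤ j := Nat.lt_succ_iff.mp h
      rcases Nat.lt_or_ge j p.length with hj | hj
      · have hadj := p.adj_getVert_succ hj
        have h1 := ih hij'
        have h2 := adj_dist_le_one hadj
        have h3 := hconn.dist_triangle (u := p.getVert i) (v := p.getVert j)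
          (w := p.getVert (j+1))
        omega
      · have e1 : p.getVert (j+1) = b := p.getVert_of_length_le (by omega)
        have e2 : p.getVert j = b := p.getVert_of_length_le hj
        have h1 := ih hij'
        rw [e2] at h1
        rw [e1]
        omega
    · have : i = j + 1 := by omega
      subst this; simp [SimpleGraph.dist_self]

private lemma getVert_dist_exact (hconn : G.Connected) {a b : V} (p : G.Walk a b)
    (hp : p.length = G.dist a b) {i : ℕ} (hi : i ≤ p.length) :
    G.dist a (p.getVert i) = i ∧ G.dist (p.getVert i) b = p.length - i := by
  have h1 : G.dist a (p.getVert i) ≤ i := by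
    have := dist_getVert_le hconn p (Nat.zero_le i)
    simpa [p.getVert_zero] using this
  have h2 : G.dist (p.getVert i) b ≤ p.length - i := by
    have := dist_getVert_le hconn p hi
    simpa [p.getVert_length] using this
  have h3 := hconn.dist_triangle (u := a) (v := p.getVert i) (w := b)
  omega

private def buildPathEmbedding (G : SimpleGraph V) (N : ℕ) (f : ℕ → V)
    (hinj : ∀ a b, a < N → b < N → f a = f b → a = b)
    (hadj : ∀ a, a + 1 < N → G.Adj (f a) (f (a+1)))
    (hnadj : ∀ a b, a < N → b < N → a + 2 ≤ b → ¬ G.Adj (f a) (f b)) :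
    pathGraph N ↪g G where
  toFun := fun t => f t.val
  inj' := by
    intro t₁ t₂ h
    exact Fin.ext (hinj t₁.val t₂.val t₁.isLt t₂.isLt h)
  map_rel_iff' := by
    intro t₁ t₂
    show G.Adj (f t₁.val) (f t₂.val) ↔ (pathGraph N).Adj t₁ t₂
    rw [pathGraph_adj]
    constructor
    · intro hAdj
      rcases Nat.lt_trichotomy t₁.val t₂.val with hlt | heq | hgt
      · rcases Nat.lt_or_ge (t₁.val + 1) t₂.val with h2 | h2
        · exact absurd hAdj (hnadj _ _ t₁.isLt t₂.isLt (by omega))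
        · left; omega
      · exact absurd (Fin.ext heq ▸ hAdj) (G.irrefl)
      · rcases Nat.lt_or_ge (t₂.val + 1) t₁.val with h2 | h2
        · exact absurd hAdj.symm (hnadj _ _ t₂.isLt t₁.isLt (by omega))
        · right; omega
    · intro h
      rcases h with h | h
      · have := hadj t₁.val (by omega)
        rwa [h] at this
      · have := hadj t₂.val (by omega)
        rw [h] at this
        exact this.symm

/-- The key construction: if `v` has an "anti-center" `c` (a vertex at distance exactly `s`
from `v` which is within distance `s-1` of every other vertex), and every vertex of the
connected graph has another vertex at distance at least `s`, then `G` contains an induced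
path on `2*s - 2` vertices. -/
private lemma path_of_anticenter (hconn : G.Connected) {s : ℕ} (hs : 3 ≤ s)
    (hno : ∀ z : V, ∃ y : V, s ≤ G.dist z y)
    {v c : V} (hcv : G.dist v c = s)
    (hcov : ∀ x : V, x ≠ v → G.dist c x ≤ s - 1) :
    Nonempty (pathGraph (2*s - 2) ↪g G) := by
  classical
  obtain ⟨p, hp⟩ := hconn.exists_walk_length_eq_dist v c
  have hplen : p.length = s := by rw [hp, hcv]
  set g : ℕ → V := p.getVert with hgdef
  have hg1 : ∀ i, i ≤ s → G.dist v (g i) = i := fun i hi =>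
    (getVert_dist_exact hconn p hp (by omega)).1
  have hgseg : ∀ i j, i ≤ j → G.dist (g i) (g j) ≤ j - i := fun i j hij =>
    dist_getVert_le hconn p hij
  have hw2 : G.dist (g (s-2)) c = 2 := by
    have h := (getVert_dist_exact hconn p hp (i := s - 2) (by omega)).2
    rw [hplen] at h
    have e : s - (s - 2) = 2 := by omega
    rwa [e] at h
  obtain ⟨x, hx⟩ := hno (g (s-2))
  have hw1 : G.dist v (g (s-2)) = s - 2 := hg1 _ (by omega)
  have hxv : x ≠ v := by
    intro h
    rw [h, SimpleGraph.dist_comm, hw1] at hx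
    omega
  have hl1 : G.dist c x ≤ s - 1 := hcov x hxv
  have hl2 : s - 2 ≤ G.dist c x := by
    have := hconn.dist_triangle (u := g (s-2)) (v := c) (w := x)
    omega
  obtain ⟨q, hq⟩ := hconn.exists_walk_length_eq_dist c x
  set ℓ : ℕ := G.dist c x with hldef
  set d : ℕ → V := q.getVert with hddef
  have hd1 : ∀ j, j ≤ ℓ → G.dist c (d j) = j := fun j hj =>
    (getVert_dist_exact hconn q hq (by omega)).1
  have hd2 : ∀ j, j ≤ ℓ → G.dist (d j) x = ℓ - j := by
    intro j hj
    have h := (getVert_dist_exact hconn q hq (i := j) (by omega)).2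
    rwa [hq] at h
  have hdseg : ∀ i j, i ≤ j → G.dist (d i) (d j) ≤ j - i := fun i j hij =>
    dist_getVert_le hconn q hij
  -- Key exclusion lemma
  have K1 : ∀ i j, i ≤ s - 1 → 1 ≤ j → j ≤ ℓ →
      g i ≠ d j ∧ (G.Adj (g i) (d j) → (i = s - 1 ∧ j = 1)) := by
    intro i j hi hj1 hjl
    have t1 : G.dist v c ≤ G.dist v (d j) + G.dist (d j) c := hconn.dist_triangle
    have t1' : G.dist (d j) c = j := by rw [SimpleGraph.dist_comm]; exact hd1 j hjl
    have hvdj : s - j ≤ G.dist v (d j) := by rw [t1', hcv] at t1; omega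
    have hgi1 : G.dist v (g i) = i := hg1 i (by omega)
    have hdjx : G.dist (d j) x = ℓ - j := hd2 j hjl
    have hwgi : (i ≤ s - 2 ∧ G.dist (g (s-2)) (g i) ≤ (s - 2) - i) ∨
        (s - 2 ≤ i ∧ G.dist (g (s-2)) (g i) ≤ i - (s - 2)) := by
      rcases le_or_gt i (s-2) with h | h
      · left
        refine ⟨h, ?_⟩
        have := hgseg i (s-2) h
        rwa [SimpleGraph.dist_comm] at this
      · right
        exact ⟨by omega, hgseg (s-2) i (by omega)⟩
    constructor
    · intro heq
      have e1 : G.dist v (d j) = i := by rw [← heq]; exact hgi1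
      have e2 : G.dist (g (s-2)) x ≤ G.dist (g (s-2)) (g i) + G.dist (g i) x :=
        hconn.dist_triangle
      have e3 : G.dist (g i) x = ℓ - j := by rw [heq]; exact hdjx
      rcases hwgi with ⟨hle, hcase⟩ | ⟨hge, hcase⟩ <;> omega
    · intro hadj
      have a0 : G.dist (g i) (d j) ≤ 1 := adj_dist_le_one hadj
      have a1 : G.dist v (d j) ≤ G.dist v (g i) + G.dist (g i) (d j) := hconn.dist_triangle
      have u1 : G.dist (g (s-2)) x ≤ G.dist (g (s-2)) (g i) + G.dist (g i) x :=
        hconn.dist_triangle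
      have u2 : G.dist (g i) x ≤ G.dist (g i) (d j) + G.dist (d j) x := hconn.dist_triangle
      rcases hwgi with ⟨hle, hcase⟩ | ⟨hge, hcase⟩ <;> omega
  have hgs : g s = c := by
    have h : p.getVert p.length = c := p.getVert_length
    rwa [hplen] at h
  have gfar : ∀ i j, i ≤ s → j ≤ s → i + 2 ≤ j → ¬ G.Adj (g i) (g j) := by
    intro i j hi hj hij hadj
    have h1 := adj_dist_le_one hadj
    have h2 : G.dist v (g j) ≤ G.dist v (g i) + G.dist (g i) (g j) := hconn.dist_triangle
    have h3 := hg1 i (by omega)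
    have h4 := hg1 j hj
    omega
  have dfar : ∀ i j, i ≤ ℓ → j ≤ ℓ → i + 2 ≤ j → ¬ G.Adj (d i) (d j) := by
    intro i j hi hj hij hadj
    have h1 := adj_dist_le_one hadj
    have h2 : G.dist c (d j) ≤ G.dist c (d i) + G.dist (d i) (d j) := hconn.dist_triangle
    have h3 := hd1 i (by omega)
    have h4 := hd1 j hj
    omega
  have ginj : ∀ i j, i ≤ s → j ≤ s → g i = g j → i = j := by
    intro i j hi hj hij
    have h3 := hg1 i hi
    have h4 := hg1 j hj
    rw [hij] at h3
    omega
  have dinj : ∀ i j, i ≤ ℓ → j ≤ ℓ → d i = d j → i = j := by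
    intro i j hi hj hij
    have h3 := hd1 i hi
    have h4 := hd1 j hj
    rw [hij] at h3
    omega
  by_cases hch : G.Adj (g (s-1)) (d 1)
  · -- chord case : path g 0 .. g (s-1), d 1, ..., skipping c
    refine ⟨buildPathEmbedding G (2*s-2) (fun t => if t < s then g t else d (t - s + 1))
      ?_ ?_ ?_⟩
    · intro a b ha hb hab
      rcases Nat.lt_or_ge a s with h1 | h1 <;> rcases Nat.lt_or_ge b s with h2 | h2
      · rw [if_pos h1, if_pos h2] at hab
        exact ginj a b (by omega) (by omega) hab
      · rw [if_pos h1, if_neg (by omega)] at hab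
        exact absurd hab (K1 a (b - s + 1) (by omega) (by omega) (by omega)).1
      · rw [if_neg (by omega), if_pos h2] at hab
        exact absurd hab.symm (K1 b (a - s + 1) (by omega) (by omega) (by omega)).1
      · rw [if_neg (by omega), if_neg (by omega)] at hab
        have := dinj (a - s + 1) (b - s + 1) (by omega) (by omega) hab
        omega
    · intro a ha
      rcases Nat.lt_or_ge (a+1) s with h1 | h1
      · rw [if_pos (by omega), if_pos h1]
        exact p.adj_getVert_succ (by omega)
      · rcases Nat.eq_or_lt_of_le h1 with h2 | h2
        · rw [if_pos (by omega), if_neg (by omega)]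
          have e : a + 1 - s + 1 = 1 := by omega
          have e2 : a = s - 1 := by omega
          rw [e, e2]
          exact hch
        · rw [if_neg (by omega), if_neg (by omega)]
          have e : a + 1 - s + 1 = (a - s + 1) + 1 := by omega
          rw [e]
          exact q.adj_getVert_succ (by omega)
    · intro a b ha hb hab hadj
      rcases Nat.lt_or_ge a s with h1 | h1 <;> rcases Nat.lt_or_ge b s with h2 | h2
      · rw [if_pos h1, if_pos h2] at hadj
        exact gfar a b (by omega) (by omega) (by omega) hadj
      · rw [if_pos h1, if_neg (by omega)] at hadj
        have := (K1 a (b - s + 1) (by omega) (by omega) (by omega)).2 hadj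
        omega
      · omega
      · rw [if_neg (by omega), if_neg (by omega)] at hadj
        exact dfar (a - s + 1) (b - s + 1) (by omega) (by omega) (by omega) hadj
  · -- no chord: path g 0 .. g s = c, d 1, ...
    refine ⟨buildPathEmbedding G (2*s-2) (fun t => if t ≤ s then g t else d (t - s))
      ?_ ?_ ?_⟩
    · intro a b ha hb hab
      rcases le_or_gt a s with h1 | h1 <;> rcases le_or_gt b s with h2 | h2
      · rw [if_pos h1, if_pos h2] at hab
        exact ginj a b h1 h2 hab
      · rw [if_pos h1, if_neg (by omega)] at hab
        rcases Nat.lt_or_ge a s with h3 | h3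
        · exact absurd hab (K1 a (b - s) (by omega) (by omega) (by omega)).1
        · have e : a = s := by omega
          rw [e, hgs] at hab
          have h5 := hd1 (b - s) (by omega)
          rw [← hab] at h5
          have h6 := G.dist_self (v := c)
          omega
      · rw [if_neg (by omega), if_pos h2] at hab
        rcases Nat.lt_or_ge b s with h3 | h3
        · exact absurd hab.symm (K1 b (a - s) (by omega) (by omega) (by omega)).1
        · have e : b = s := by omega
          rw [e, hgs] at hab
          have h5 := hd1 (a - s) (by omega)
          rw [hab] at h5
          have h6 := G.dist_self (v := c)
          omega
      · rw [if_neg (by omega), if_neg (by omega)] at hab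
        have := dinj (a - s) (b - s) (by omega) (by omega) hab
        omega
    · intro a ha
      rcases le_or_gt (a+1) s with h1 | h1
      · rw [if_pos (by omega), if_pos h1]
        exact p.adj_getVert_succ (by omega)
      · rcases Nat.eq_or_lt_of_le h1 with h2 | h2
        · rw [if_pos (by omega), if_neg (by omega)]
          have e2 : a = s := by omega
          have e : a + 1 - s = 1 := by omega
          rw [e, e2, hgs]
          have h7 := q.adj_getVert_succ (i := 0) (by omega)
          rwa [q.getVert_zero] at h7
        · rw [if_neg (by omega), if_neg (by omega)]
          have e : a + 1 - s = (a - s) + 1 := by omega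
          rw [e]
          exact q.adj_getVert_succ (by omega)
    · intro a b ha hb hab hadj
      rcases le_or_gt a s with h1 | h1 <;> rcases le_or_gt b s with h2 | h2
      · rw [if_pos h1, if_pos h2] at hadj
        exact gfar a b h1 h2 (by omega) hadj
      · rw [if_pos h1, if_neg (by omega)] at hadj
        rcases Nat.lt_or_ge a s with h3 | h3
        · obtain ⟨e1, e2⟩ := (K1 a (b - s) (by omega) (by omega) (by omega)).2 hadj
          rw [e1, e2] at hadj
          exact hch hadj
        · have e : a = s := by omega
          rw [e, hgs] at hadj
          have h5 := adj_dist_le_one hadj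
          have h6 := hd1 (b - s) (by omega)
          omega
      · omega
      · rw [if_neg (by omega), if_neg (by omega)] at hadj
        exact dfar (a - s) (b - s) (by omega) (by omega) (by omega) hadj


private lemma reachable_induce_of_support {S : Set V} :
    ∀ {a b : V} (p : G.Walk a b), (∀ x ∈ p.support, x ∈ S) →
    ∀ (ha : a ∈ S) (hb : b ∈ S), (G.induce S).Reachable ⟨a, ha⟩ ⟨b, hb⟩ := by
  intro a b p
  induction p with
  | nil =>
    intro _ ha hb
    exact Reachable.refl _
  | @cons α β γ hadj q ih =>
    intro hsup ha hb
    have hβ : β ∈ S := hsup β (by simp [Walk.support_cons])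
    have hadj' : (G.induce S).Adj ⟨α, ha⟩ ⟨β, hβ⟩ := hadj
    refine hadj'.reachable.trans (ih ?_ hβ hb)
    intro y hy
    exact hsup y (by simp [Walk.support_cons, hy])

private def pathGraphCastLE {m n : ℕ} (h : m ≤ n) : pathGraph m ↪g pathGraph n where
  toFun := Fin.castLE h
  inj' := Fin.castLE_injective h
  map_rel_iff' := by
    intro a b
    simp [pathGraph_adj]

private def pathTwoEmbOfAdj {a b : V} (h : G.Adj a b) : pathGraph 2 ↪g G where
  toFun := fun t => if t = 0 then a else b
  inj' := by
    intro t₁ t₂ ht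
    fin_cases t₁ <;> fin_cases t₂ <;> simp_all
  map_rel_iff' := by
    intro t₁ t₂
    show G.Adj (if t₁ = 0 then a else b) (if t₂ = 0 then a else b) ↔ _
    fin_cases t₁ <;> fin_cases t₂ <;>
      simp [pathGraph_adj, h, h.symm, G.irrefl]


universe u

private lemma exists_path_of_no_center (s : ℕ) (hs : 3 ≤ s) :
    ∀ (n : ℕ) (V : Type u) (_ : Fintype V) (G : SimpleGraph V), Fintype.card V ≤ n →
      G.Connected → (∀ z : V, ∃ y : V, s ≤ G.dist z y) →
      Nonempty (pathGraph (2*s - 2) ↪g G) := by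
  intro n
  induction n with
  | zero =>
    intro V hV G hcard hconn _
    haveI : Nonempty V := hconn.nonempty
    have : 0 < Fintype.card V := Fintype.card_pos
    omega
  | succ n ih =>
    intro V hV G hcard hconn hno
    classical
    haveI : Nonempty V := hconn.nonempty
    obtain ⟨u₀⟩ := hconn.nonempty
    obtain ⟨v, hv⟩ := Finite.exists_max (fun x => G.dist u₀ x)
    have hvfar : s ≤ G.dist u₀ v := le_trans (hno u₀).choose_spec (hv _)
    have hvne : v ≠ u₀ := by
      intro h
      rw [h, G.dist_self] at hvfar
      omega
    have havoid : ∀ x : V, x ≠ v → ∃ pw : G.Walk x u₀, v ∉ pw.support := by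
      intro x hx
      obtain ⟨pw, hpw⟩ := hconn.exists_walk_length_eq_dist x u₀
      refine ⟨pw, fun hmem => ?_⟩
      have h1 : (pw.takeUntil v hmem).length + (pw.dropUntil v hmem).length = pw.length := by
        have h0 := congrArg Walk.length (pw.take_spec hmem)
        rwa [Walk.length_append] at h0
      have h2 : G.dist x v ≤ (pw.takeUntil v hmem).length := G.dist_le _
      have h3 : G.dist v u₀ ≤ (pw.dropUntil v hmem).length := G.dist_le _
      have h4 : 0 < G.dist x v := hconn.pos_dist_of_ne hx
      have h5 : G.dist x u₀ ≤ G.dist u₀ v := by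
        rw [SimpleGraph.dist_comm]
        exact hv x
      have h6 : G.dist v u₀ = G.dist u₀ v := SimpleGraph.dist_comm
      omega
    set S : Set V := {x | x ≠ v} with hSdef
    have hu₀ : u₀ ∈ S := Ne.symm hvne
    have hreach : ∀ (x : V) (hx : x ∈ S), (G.induce S).Reachable ⟨x, hx⟩ ⟨u₀, hu₀⟩ := by
      intro x hx
      obtain ⟨pw, hpw⟩ := havoid x hx
      have hsup : ∀ y ∈ pw.support, y ∈ S := fun y hy hyv => hpw (hyv ▸ hy)
      exact reachable_induce_of_support pw hsup hx hu₀
    haveI : Nonempty S := ⟨⟨u₀, hu₀⟩⟩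
    have hconn' : (G.induce S).Connected := by
      refine ⟨fun a b => ?_⟩
      exact (hreach a.1 a.2).trans (hreach b.1 b.2).symm
    have hdist' : ∀ (a b : S), G.dist a.1 b.1 ≤ (G.induce S).dist a b := by
      intro a b
      obtain ⟨qw, hqw⟩ := hconn'.exists_walk_length_eq_dist a b
      have h7 := G.dist_le (qw.map (Embedding.induce S).toHom)
      rwa [Walk.length_map, hqw] at h7
    by_cases hrec : ∀ z : S, ∃ y : S, s ≤ (G.induce S).dist z y
    · have hcard' : Fintype.card S ≤ n := by
        have h8 : Fintype.card S < Fintype.card V := Fintype.card_subtype_lt (x := v) (fun h => h rfl)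
        omega
      obtain ⟨E⟩ := ih S (Subtype.fintype _) (G.induce S) hcard' hconn' hrec
      exact ⟨(Embedding.induce S).comp E⟩
    · push_neg at hrec
      obtain ⟨c', hc'⟩ := hrec
      have hcov : ∀ x : V, x ≠ v → G.dist c'.1 x ≤ s - 1 := by
        intro x hx
        have h1 : G.dist c'.1 x ≤ (G.induce S).dist c' ⟨x, hx⟩ := hdist' c' ⟨x, hx⟩
        have h2 := hc' ⟨x, hx⟩
        omega
      obtain ⟨pw0, hpw0⟩ := hconn.exists_walk_length_eq_dist v u₀
      have hlen0 : 0 < pw0.length := by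
        rw [hpw0]
        exact hconn.pos_dist_of_ne hvne
      have hnb : G.Adj v (pw0.getVert 1) := by
        have h9 := pw0.adj_getVert_succ (i := 0) hlen0
        rwa [pw0.getVert_zero] at h9
      have hune : pw0.getVert 1 ≠ v := fun h => G.irrefl (h ▸ hnb)
      have hle : G.dist c'.1 v ≤ s := by
        have t := hconn.dist_triangle (u := c'.1) (v := pw0.getVert 1) (w := v)
        have t2 : G.dist (pw0.getVert 1) v ≤ 1 := adj_dist_le_one hnb.symm
        have t3 := hcov _ hune
        omega
      have hge : s ≤ G.dist c'.1 v := by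
        obtain ⟨y, hy⟩ := hno c'.1
        by_cases hyv : y = v
        · rwa [hyv] at hy
        · have := hcov y hyv
          omega
      have hcv : G.dist v c'.1 = s := by
        rw [SimpleGraph.dist_comm]
        omega
      exact path_of_anticenter hconn hs hno hcv hcov


private lemma exists_center_of_pathFree {V : Type*} [Fintype V] (k s : ℕ) (hk : 2 ≤ k)
    (hs : 2 ≤ s) (hks : k ≤ 2 * s - 2) (G : SimpleGraph V) (hconn : G.Connected)
    (hfree : IsEmpty (pathGraph k ↪g G)) :
    ∃ c : V, ∀ v : V, G.dist v c ≤ s - 1 := by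
  classical
  haveI : Nonempty V := hconn.nonempty
  by_contra hcon
  push_neg at hcon
  have hno : ∀ z : V, ∃ y : V, s ≤ G.dist z y := by
    intro z
    obtain ⟨y, hy⟩ := hcon z
    refine ⟨y, ?_⟩
    rw [SimpleGraph.dist_comm]
    omega
  have hs3 : 3 ≤ s := by
    rcases Nat.lt_or_ge s 3 with h3 | h3
    · exfalso
      have hk2 : k = 2 := by omega
      subst hk2
      obtain ⟨y, hy⟩ := hno (Classical.arbitrary V)
      have hd0 : G.dist (Classical.arbitrary V) y ≠ 0 := by omega
      obtain ⟨p, hp⟩ := SimpleGraph.exists_walk_of_dist_ne_zero hd0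
      have hlen : 0 < p.length := by rw [hp]; omega
      have hadj : G.Adj (Classical.arbitrary V) (p.getVert 1) := by
        have h9 := p.adj_getVert_succ (i := 0) hlen
        rwa [p.getVert_zero] at h9
      exact hfree.false (pathTwoEmbOfAdj hadj)
    · exact h3
  obtain ⟨E⟩ := exists_path_of_no_center s hs3 (Fintype.card V) V inferInstance G le_rfl
    hconn hno
  exact hfree.false (E.comp (pathGraphCastLE (by omega)))

end Aux

/-- The burning number conjecture holds for connected `P_k`-free graphs on `n` vertices
whenever `k < 2⌈√n⌉ - 1`. -/
theorem burningNumber_conjecture_of_pathFree {V : Type*} [Fintype V] (k : ℕ) (hk : 2 ≤ k)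
    (G : SimpleGraph V) (hconn : G.Connected)
    (hfree : IsEmpty (pathGraph k ↪g G))
    (hklt : k < 2 * ⌈Real.sqrt (Fintype.card V)⌉₊ - 1) :
    burningNumber G ≤ ⌈Real.sqrt (Fintype.card V)⌉₊ := by
  set s := ⌈Real.sqrt (Fintype.card V)⌉₊ with hsdef
  have hs2 : 2 ≤ s := by omega
  have hks : k ≤ 2 * s - 2 := by omega
  obtain ⟨c, hc⟩ := exists_center_of_pathFree k s hk hs2 hks G hconn hfree
  have hmem : s ∈ {m : ℕ | ∃ b : Fin m → V, IsBurningSeq G b} := by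
    refine ⟨fun _ => c, fun v => ?_⟩
    obtain ⟨w, hw⟩ := hconn.exists_walk_length_eq_dist v c
    refine ⟨⟨0, by omega⟩, w, ?_⟩
    have h1 := hc v
    simp only [hw]
    omega
  exact Nat.sInf_le hmem
end

section
/- Let G be a finite simple graph and let D be a nonempty dominating set of G. Then b(G) ≤ b(G[D]) + 1, where G[D] is the subgraph of G induced by D and distances for burning G[D] are taken within G[D]. -/
open SimpleGraph

lemma exists_isBurningSeq {V : Type*} [Fintype V] [Nonempty V] (G : SimpleGraph V) :
    ∃ k : ℕ, ∃ b : Fin k → V, IsBurningSeq G b := by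
  classical
  obtain ⟨e⟩ := Fintype.truncEquivFin V
  refine ⟨Fintype.card V, fun i => e.symm i, fun v => ⟨e v,
    (SimpleGraph.Walk.nil : G.Walk v v).copy rfl (e.symm_apply_apply v).symm, ?_⟩⟩
  simp only [SimpleGraph.Walk.length_copy, SimpleGraph.Walk.length_nil]
  have := (e v).is_lt
  omega

/-- If `D` is a nonempty dominating set of `G`, then `b(G) ≤ b(G[D]) + 1`. -/
theorem burningNumber_le_burningNumber_induce_dominating {V : Type*} [Fintype V]
    (G : SimpleGraph V) (D : Set V) (hne : D.Nonempty)
    (hdom : ∀ v : V, v ∉ D → ∃ u ∈ D, G.Adj v u) :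
    burningNumber G ≤ burningNumber (G.induce D) + 1 := by
  haveI : Nonempty D := hne.to_subtype
  haveI : Fintype D := Fintype.ofFinite _
  set k := burningNumber (G.induce D) with hk
  have hmem : k ∈ {n : ℕ | ∃ b : Fin n → ↥D, IsBurningSeq (G.induce D) b} :=
    Nat.sInf_mem (by obtain ⟨n, b, hb⟩ := exists_isBurningSeq (G.induce D); exact ⟨n, b, hb⟩)
  obtain ⟨b, hb⟩ := hmem
  apply Nat.sInf_le
  refine ⟨fun i => if h : (i : ℕ) < k then (b ⟨i, h⟩ : V) else hne.choose, ?_⟩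
  have hbval : ∀ i : Fin k,
      (if h : ((i.castSucc : Fin (k+1)) : ℕ) < k then (b ⟨(i.castSucc : Fin (k+1)), h⟩ : V)
        else hne.choose) = (b i : V) := by
    intro i
    rw [dif_pos (by simp)]
    exact congrArg (fun j => (b j : V)) (Fin.ext (by simp))
  intro v
  by_cases hv : v ∈ D
  · obtain ⟨i, w, hw⟩ := hb ⟨v, hv⟩
    refine ⟨i.castSucc, ((w.map (SimpleGraph.Embedding.induce D).toHom).copy rfl
      (hbval i).symm), ?_⟩
    simp only [SimpleGraph.Walk.length_copy, SimpleGraph.Walk.length_map, Fin.coe_castSucc]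
    erw [SimpleGraph.Walk.length_copy, SimpleGraph.Walk.length_map]
    omega
  · obtain ⟨u, hu, hadj⟩ := hdom v hv
    obtain ⟨i, w, hw⟩ := hb ⟨u, hu⟩
    refine ⟨i.castSucc, SimpleGraph.Walk.cons hadj
      ((w.map (SimpleGraph.Embedding.induce D).toHom).copy rfl (hbval i).symm), ?_⟩
    simp only [SimpleGraph.Walk.length_cons, SimpleGraph.Walk.length_copy,
      SimpleGraph.Walk.length_map, Fin.coe_castSucc]
    erw [SimpleGraph.Walk.length_copy, SimpleGraph.Walk.length_map]
    omega
end

section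
/- Let G be a finite connected simple graph with at least one edge. Then b(G) ≤ b(L(G)) + 1, where L(G) is the line graph of G. -/
open SimpleGraph

/-- Two distinct vertices of a common edge are adjacent. -/
lemma adj_of_mem_edge {V : Type*} {G : SimpleGraph V} {e : Sym2 V} (he : e ∈ G.edgeSet)
    {x y : V} (hx : x ∈ e) (hy : y ∈ e) (hxy : x ≠ y) : G.Adj x y := by
  have : e = s(x, y) := (Sym2.mem_and_mem_iff hxy).mp ⟨hx, hy⟩
  rw [this] at he
  exact he

/-- From a walk in the line graph, get a short walk in `G` between endpoints. -/
lemma walk_of_lineGraph_walk {V : Type*} {G : SimpleGraph V} {e f : G.edgeSet}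
    (wL : G.lineGraph.Walk e f) :
    ∀ v ∈ (e : Sym2 V), ∀ u ∈ (f : Sym2 V), ∃ w : G.Walk v u, w.length ≤ wL.length + 1 := by
  induction wL with
  | @nil a =>
    intro v hv u hu
    by_cases h : v = u
    · subst h; exact ⟨SimpleGraph.Walk.nil, by simp⟩
    · exact ⟨(adj_of_mem_edge a.2 hv hu h).toWalk, by simp⟩
  | @cons e e' f h p ih =>
    intro v hv u hu
    obtain ⟨hne, x, hx, hx'⟩ := (SimpleGraph.lineGraph_adj_iff_exists).mp h
    obtain ⟨w, hw⟩ := ih x hx' u hu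
    by_cases hvx : v = x
    · subst hvx
      exact ⟨w, by simp only [SimpleGraph.Walk.length_cons]; omega⟩
    · refine ⟨(adj_of_mem_edge e.2 hv hx hvx).toWalk.append w, ?_⟩
      simp only [SimpleGraph.Walk.length_append, SimpleGraph.Walk.length_cons,
        SimpleGraph.Adj.toWalk, SimpleGraph.Walk.length_cons, SimpleGraph.Walk.length_nil]
      omega

/-- For a connected graph `G` with at least one edge, `b(G) ≤ b(L(G)) + 1`. -/
theorem burningNumber_le_burningNumber_lineGraph_add_one {V : Type*} [Fintype V]
    (G : SimpleGraph V) (hconn : G.Connected) (hedge : G.edgeSet.Nonempty) :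
    burningNumber G ≤ burningNumber G.lineGraph + 1 := by
  classical
  have hfty : Fintype G.edgeSet := Fintype.ofFinite _
  obtain ⟨e₀, he₀⟩ := hedge
  have hSne : ({k : ℕ | ∃ b : Fin k → G.edgeSet, IsBurningSeq G.lineGraph b}).Nonempty := by
    refine ⟨Fintype.card G.edgeSet, (Fintype.equivFin G.edgeSet).symm, ?_⟩
    intro v
    refine ⟨Fintype.equivFin G.edgeSet v, SimpleGraph.Walk.nil.copy rfl (by simp), ?_⟩
    have := ((Fintype.equivFin G.edgeSet) v).isLt
    simp only [SimpleGraph.Walk.length_copy, SimpleGraph.Walk.length_nil]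
    omega
  have hmem := Nat.sInf_mem hSne
  obtain ⟨bb, hb⟩ := hmem
  set k := burningNumber G.lineGraph with hk
  let b' : Fin (k + 1) → V := fun i =>
    if h : (i : ℕ) < k then ((bb ⟨i, h⟩ : G.edgeSet) : Sym2 V).out.1 else e₀.out.1
  have hmain : (k + 1) ∈ {m : ℕ | ∃ c : Fin m → V, IsBurningSeq G c} := by
    refine ⟨b', ?_⟩
    intro v
    have hvx : ∃ x, G.Adj v x := by
      obtain ⟨a, b2, hab⟩ : ∃ a b2, G.Adj a b2 := by
        induction e₀ using Sym2.ind with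
        | _ a b2 => exact ⟨a, b2, he₀⟩
      by_cases hva : v = a
      · exact ⟨b2, hva ▸ hab⟩
      · obtain ⟨p⟩ := hconn v a
        cases p with
        | nil => exact absurd rfl hva
        | cons h _ => exact ⟨_, h⟩
    obtain ⟨x, hvx⟩ := hvx
    have hemem : s(v, x) ∈ G.edgeSet := hvx
    obtain ⟨i, wL, hwL⟩ := hb ⟨s(v, x), hemem⟩
    obtain ⟨w, hw⟩ := walk_of_lineGraph_walk wL v (by simp)
      ((bb i : G.edgeSet) : Sym2 V).out.1 (Sym2.out_fst_mem _)
    have hik : (i : ℕ) < k := i.2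
    have hb' : b' ⟨(i : ℕ), by omega⟩ = ((bb i : G.edgeSet) : Sym2 V).out.1 := by
      simp only [b', dif_pos hik, Fin.eta]
    refine ⟨⟨(i : ℕ), by omega⟩, w.copy rfl hb'.symm, ?_⟩
    simp only [SimpleGraph.Walk.length_copy]
    have hkeq : k = sInf {k | ∃ b : Fin k → G.edgeSet, IsBurningSeq G.lineGraph b} := rfl
    omega
  calc burningNumber G ≤ k + 1 := Nat.sInf_le hmain
    _ = burningNumber G.lineGraph + 1 := rfl
end

section
/- Let G be a finite connected simple graph with at least one edge. Then b(L(G)) ≤ b(G) + 1, where L(G) is the line graph of G. -/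
open SimpleGraph

/-- Two edges sharing a vertex are joined by a line-graph walk of length at most 1. -/
lemma lineWalk_step {V : Type*} {G : SimpleGraph V} (e f : G.edgeSet) (u : V)
    (hu : u ∈ (e : Sym2 V)) (hv : u ∈ (f : Sym2 V)) :
    ∃ p : G.lineGraph.Walk e f, p.length ≤ 1 := by
  by_cases h : e = f
  · subst h; exact ⟨SimpleGraph.Walk.nil, by simp⟩
  · refine ⟨SimpleGraph.Walk.cons ⟨h, u, by simpa using ⟨hu, hv⟩⟩ SimpleGraph.Walk.nil, ?_⟩
    exact le_rfl

/-- A walk in `G` from `u` to `x` gives a line-graph walk between any edge containing `u`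
and any edge containing `x`, of length at most one more. -/
lemma lineWalk_of_walk {V : Type*} {G : SimpleGraph V} :
    ∀ {u x : V} (w : G.Walk u x) (e f : G.edgeSet),
      u ∈ (e : Sym2 V) → x ∈ (f : Sym2 V) →
      ∃ p : G.lineGraph.Walk e f, p.length ≤ w.length + 1 := by
  intro u x w
  induction w with
  | nil =>
    intro e f hu hx
    obtain ⟨p, hp⟩ := lineWalk_step e f _ hu hx
    exact ⟨p, by simpa using hp⟩
  | @cons a b c hab q ih =>
    intro e f hu hx
    have hg : s(a, b) ∈ G.edgeSet := hab
    obtain ⟨p, hp⟩ := ih ⟨s(a, b), hg⟩ f (by simp) hx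
    obtain ⟨p0, hp0⟩ := lineWalk_step e ⟨s(a, b), hg⟩ a hu (by simp)
    refine ⟨p0.append p, ?_⟩
    simp only [SimpleGraph.Walk.length_append, SimpleGraph.Walk.length_cons]
    omega

/-- Every vertex of a connected graph with an edge is contained in some edge. -/
lemma exists_edge_mem {V : Type*} {G : SimpleGraph V} (hconn : G.Connected)
    (hedge : G.edgeSet.Nonempty) (v : V) : ∃ e : G.edgeSet, v ∈ (e : Sym2 V) := by
  obtain ⟨e0, he0⟩ := hedge
  obtain ⟨x, hx⟩ : ∃ x, x ∈ e0 := by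
    induction e0 using Sym2.ind with
    | h a b => exact ⟨a, by simp⟩
  obtain ⟨w⟩ := hconn v x
  cases w with
  | nil => exact ⟨⟨e0, he0⟩, hx⟩
  | cons h q => exact ⟨⟨s(v, _), h⟩, by simp⟩

/-- For a connected graph `G` with at least one edge, `b(L(G)) ≤ b(G) + 1`. -/
theorem burningNumber_lineGraph_le_burningNumber_add_one {V : Type*} [Fintype V]
    (G : SimpleGraph V) (hconn : G.Connected) (hedge : G.edgeSet.Nonempty) :
    burningNumber G.lineGraph ≤ burningNumber G + 1 := by
  classical
  have hV : Nonempty V := hconn.nonempty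
  have hne : {k : ℕ | ∃ b : Fin k → V, IsBurningSeq G b}.Nonempty := by
    refine ⟨Fintype.card V, fun j => (Fintype.equivFin V).symm j, fun v => ?_⟩
    refine ⟨Fintype.equivFin V v,
      SimpleGraph.Walk.nil.copy rfl (Equiv.symm_apply_apply _ _).symm, ?_⟩
    have := ((Fintype.equivFin V) v).isLt
    simp only [SimpleGraph.Walk.length_copy, SimpleGraph.Walk.length_nil]
    omega
  have hmem := Nat.sInf_mem hne
  set k := burningNumber G with hk
  obtain ⟨b, hb⟩ : ∃ b : Fin k → V, IsBurningSeq G b := hmem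
  have hedges : ∀ v : V, ∃ e : G.edgeSet, v ∈ (e : Sym2 V) := exists_edge_mem hconn hedge
  choose ed hed using hedges
  obtain ⟨e0, he0⟩ := hedge
  set c : Fin (k + 1) → G.edgeSet :=
    fun i => if h : (i : ℕ) < k then ed (b ⟨i, h⟩) else ⟨e0, he0⟩ with hc
  refine Nat.sInf_le ⟨c, fun e => ?_⟩
  obtain ⟨u, hu⟩ : ∃ u, u ∈ (e : Sym2 V) := by
    induction (e : Sym2 V) using Sym2.ind with
    | h x y => exact ⟨x, by simp⟩
  obtain ⟨i, w, hw⟩ := hb u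
  have hi : (i : ℕ) < k := i.isLt
  have hik : (i : ℕ) < k + 1 := by omega
  obtain ⟨p, hp⟩ := lineWalk_of_walk w e (ed (b i)) hu (hed _)
  refine ⟨⟨(i : ℕ), hik⟩, ?_⟩
  have hceq : c ⟨(i : ℕ), hik⟩ = ed (b i) := by
    show (if h : (i : ℕ) < k then ed (b ⟨(i : ℕ), h⟩) else ⟨e0, he0⟩) = ed (b i)
    rw [dif_pos hi]
  rw [hceq]
  refine ⟨p, ?_⟩
  show p.length + (i : ℕ) + 1 ≤ k + 1
  omega
end

section
/- Let G be a finite connected simple graph with at least one edge. Then b(G) − 1 ≤ b(L(G)) ≤ b(G) + 1, where L(G) is the line graph of G. -/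
open SimpleGraph

section Aux

variable {V : Type*} {G : SimpleGraph V}

lemma walk_of_mem_edge {e : Sym2 V} (he : e ∈ G.edgeSet)
    {v u : V} (hv : v ∈ e) (hu : u ∈ e) : ∃ w : G.Walk v u, w.length ≤ 1 := by
  by_cases h : v = u
  · subst h; exact ⟨.nil, by simp⟩
  · have he' : e = s(v, u) := (Sym2.mem_and_mem_iff h).mp ⟨hv, hu⟩
    have hadj : G.Adj v u := by rwa [he', G.mem_edgeSet] at he
    exact ⟨.cons hadj .nil, by simp⟩

lemma lineWalk_of_share {e f : G.edgeSet} {v : V}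
    (hv : v ∈ (e : Sym2 V)) (hv' : v ∈ (f : Sym2 V)) :
    ∃ w : G.lineGraph.Walk e f, w.length ≤ 1 := by
  by_cases h : e = f
  · subst h; exact ⟨.nil, by simp⟩
  · exact ⟨.cons (lineGraph_adj_iff_exists.mpr ⟨h, v, hv, hv'⟩) .nil, by simp⟩

lemma exists_walk_of_lineWalk {e f : G.edgeSet}
    (w : G.lineGraph.Walk e f) :
    ∀ v u : V, v ∈ (e : Sym2 V) → u ∈ (f : Sym2 V) →
      ∃ p : G.Walk v u, p.length ≤ w.length + 1 := by
  induction w with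
  | nil =>
    intro v u hv hu
    exact walk_of_mem_edge (by exact Subtype.coe_prop _) hv hu
  | @cons e e' f h w ih =>
    intro v u hv hu
    obtain ⟨-, x, hx1, hx2⟩ := lineGraph_adj_iff_exists.mp h
    obtain ⟨p1, hp1⟩ := walk_of_mem_edge (e := (e : Sym2 V)) (Subtype.coe_prop _) hv hx1
    obtain ⟨p2, hp2⟩ := ih x u hx2 hu
    refine ⟨p1.append p2, ?_⟩
    rw [Walk.length_append, Walk.length_cons]
    omega

lemma exists_lineWalk_of_walk {v u : V} (p : G.Walk v u) :
    ∀ e f : G.edgeSet, v ∈ (e : Sym2 V) → u ∈ (f : Sym2 V) →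
      ∃ w : G.lineGraph.Walk e f, w.length ≤ p.length + 1 := by
  induction p with
  | nil =>
    intro e f hv hu
    exact lineWalk_of_share hv hu
  | @cons v x u h p ih =>
    intro e f hv hu
    set e' : G.edgeSet := ⟨s(v, x), h⟩ with he'
    have hx : x ∈ (e' : Sym2 V) := by simp [he']
    have hv' : v ∈ (e' : Sym2 V) := by simp [he']
    obtain ⟨w1, hw1⟩ := lineWalk_of_share hv hv'
    obtain ⟨w2, hw2⟩ := ih e' f hx hu
    refine ⟨w1.append w2, ?_⟩
    rw [Walk.length_append, Walk.length_cons]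
    omega

end Aux

/-- For a connected graph `G` with at least one edge,
`b(G) - 1 ≤ b(L(G)) ≤ b(G) + 1`. -/
theorem burningNumber_lineGraph_bounds {V : Type*} [Fintype V]
    (G : SimpleGraph V) (hconn : G.Connected) (hedge : G.edgeSet.Nonempty) :
    burningNumber G - 1 ≤ burningNumber G.lineGraph ∧
      burningNumber G.lineGraph ≤ burningNumber G + 1 := by
  classical
  obtain ⟨e₀, he₀⟩ := hedge
  -- every vertex has an incident edge
  have hinc : ∀ v : V, ∃ e : G.edgeSet, v ∈ (e : Sym2 V) := by
    intro v
    have hne : ∃ a : V, a ≠ v := by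
      induction e₀ using Sym2.inductionOn with
      | hf a b =>
        have hab : a ≠ b := (G.mem_edgeSet.mp he₀).ne
        by_cases h : a = v
        · exact ⟨b, by rintro rfl; exact hab h⟩
        · exact ⟨a, h⟩
    obtain ⟨a, ha⟩ := hne
    obtain ⟨p⟩ := hconn v a
    cases p with
    | nil => exact absurd rfl ha.symm
    | cons h p => exact ⟨⟨s(v, _), h⟩, by simp⟩
  choose ein hein using hinc
  have hV : Nonempty V := ⟨(e₀.out).1⟩
  obtain ⟨v₀⟩ := hV
  -- nonemptiness of the burning set for G
  have hGset : {k : ℕ | ∃ b : Fin k → V, IsBurningSeq G b}.Nonempty := by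
    refine ⟨(Finset.univ.sup fun v => G.dist v v₀) + 1, fun _ => v₀, fun v => ?_⟩
    obtain ⟨p, hp⟩ := (hconn v v₀).exists_walk_length_eq_dist
    refine ⟨⟨0, Nat.succ_pos _⟩, p, ?_⟩
    have : G.dist v v₀ ≤ Finset.univ.sup fun v => G.dist v v₀ :=
      Finset.le_sup (f := fun v => G.dist v v₀) (Finset.mem_univ v)
    simp only [Fin.val_mk]
    omega
  set kG := burningNumber G with hkG
  have hbG : ∃ b : Fin kG → V, IsBurningSeq G b := Nat.sInf_mem hGset
  obtain ⟨bG, hbG⟩ := hbG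
  have hmemL : (kG + 1) ∈ {k : ℕ | ∃ b : Fin k → G.edgeSet, IsBurningSeq G.lineGraph b} := by
    refine ⟨fun i => if h : (i : ℕ) < kG then ein (bG ⟨i, h⟩) else ein v₀, fun f => ?_⟩
    have hf : ((f : Sym2 V).out).1 ∈ (f : Sym2 V) := Sym2.out_fst_mem _
    obtain ⟨i, p, hp⟩ := hbG ((f : Sym2 V).out).1
    obtain ⟨w, hw⟩ := exists_lineWalk_of_walk p f (ein (bG i)) hf (hein _)
    refine ⟨⟨(i : ℕ), by omega⟩, ?_⟩
    simp only [Fin.val_mk]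
    rw [dif_pos i.isLt]
    exact ⟨(by simpa using w), by simp; omega⟩
  have hupper : burningNumber G.lineGraph ≤ kG + 1 := Nat.sInf_le hmemL
  refine ⟨?_, hupper⟩
  set kL := burningNumber G.lineGraph with hkL
  obtain ⟨cL, hcL⟩ : ∃ b : Fin kL → G.edgeSet, IsBurningSeq G.lineGraph b :=
    Nat.sInf_mem ⟨kG + 1, hmemL⟩
  have hmemG : (kL + 1) ∈ {k : ℕ | ∃ b : Fin k → V, IsBurningSeq G b} := by
    refine ⟨fun i => if h : (i : ℕ) < kL then (((cL ⟨i, h⟩ : G.edgeSet) : Sym2 V).out).1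
      else v₀, fun v => ?_⟩
    obtain ⟨i, w, hw⟩ := hcL (ein v)
    obtain ⟨p, hp⟩ := exists_walk_of_lineWalk w v (((cL i : G.edgeSet) : Sym2 V).out).1
      (hein v) (Sym2.out_fst_mem _)
    refine ⟨⟨(i : ℕ), by omega⟩, ?_⟩
    simp only [Fin.val_mk]
    rw [dif_pos i.isLt]
    exact ⟨p, by omega⟩
  have : kG ≤ kL + 1 := Nat.sInf_le hmemG
  omega
end

section
/- Let T be a finite tree (a connected acyclic simple graph) with at least one edge. Then b(L(T)) ≤ b(T), where L(T) is the line graph of T. -/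
open SimpleGraph

set_option linter.unusedSectionVars false

namespace BurnAux

variable {V : Type*} [DecidableEq V] {T : SimpleGraph V}

/-- The unique path from `v` to `root` in a tree. -/
noncomputable def thePath (htree : T.IsTree) (v root : V) : T.Walk v root :=
  (htree.existsUnique_path v root).choose

lemma thePath_isPath (htree : T.IsTree) (v root : V) : (thePath htree v root).IsPath :=
  (htree.existsUnique_path v root).choose_spec.1

lemma thePath_unique (htree : T.IsTree) {v root : V} (p : T.Walk v root) (hp : p.IsPath) :
    p = thePath htree v root :=
  (htree.existsUnique_path v root).choose_spec.2 p hp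

/-- The next vertex on the path from `v` to `root`. -/
noncomputable def nxt (htree : T.IsTree) (root : V) (v : V) : V :=
  (thePath htree v root).getVert 1

lemma nxt_root (htree : T.IsTree) (root : V) : nxt htree root root = root := by
  have : (Walk.nil : T.Walk root root) = thePath htree root root :=
    thePath_unique htree _ (Walk.IsPath.nil)
  simp [nxt, ← this, Walk.getVert]

lemma nxt_adj (htree : T.IsTree) {root v : V} (hv : v ≠ root) :
    T.Adj v (nxt htree root v) :=
  Walk.adj_snd (Walk.not_nil_of_ne hv)

/-- Key structural lemma: for adjacent `v, u`, one of them is the next vertex of the other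
(towards the root). -/
lemma nxt_eq_or (htree : T.IsTree) (root : V) {v u : V} (h : T.Adj v u) :
    nxt htree root v = u ∨ nxt htree root u = v := by
  by_cases hc : nxt htree root v = u
  · exact Or.inl hc
  · right
    -- show that `u ∉ support (thePath v)`, hence `cons h.symm (thePath v)` is the path from u
    have hu : u ∉ (thePath htree v root).support := by
      intro hmem
      apply hc
      -- the initial segment of thePath v up to u is a path from v to u, as is the single edge
      have h1 : ((thePath htree v root).takeUntil u hmem).IsPath :=
        (thePath_isPath htree v root).takeUntil hmem
      have h2 : (Walk.cons h (Walk.nil : T.Walk u u)).IsPath := by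
        rw [Walk.cons_isPath_iff]
        refine ⟨Walk.IsPath.nil, ?_⟩
        simp [h.ne]
      have heq : (thePath htree v root).takeUntil u hmem = Walk.cons h Walk.nil := by
        rw [thePath_unique htree _ h1, thePath_unique htree _ h2]
      have hspec := (thePath htree v root).take_spec hmem
      rw [heq] at hspec
      rw [nxt, ← hspec]
      simp [Walk.getVert_cons_succ]
    have hpath : (Walk.cons h.symm (thePath htree v root)).IsPath := by
      rw [Walk.cons_isPath_iff]
      exact ⟨thePath_isPath htree v root, hu⟩
    have := thePath_unique htree _ hpath
    rw [nxt, ← this]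
    exact Walk.snd_cons _ _

variable (htree : T.IsTree) (root : V) (e₀ : Sym2 V)

/-- The edge associated to a vertex: its edge toward the root, or `e₀` for the root itself. -/
noncomputable def Ed (v : V) : Sym2 V :=
  if v = root then e₀ else s(v, nxt htree root v)

lemma Ed_mem_edgeSet (he₀ : e₀ ∈ T.edgeSet) (v : V) : Ed htree root e₀ v ∈ T.edgeSet := by
  unfold Ed
  split
  · exact he₀
  · exact (nxt_adj htree (by assumption))

lemma mem_Ed (hroot : root ∈ e₀) (v : V) : v ∈ Ed htree root e₀ v := by
  unfold Ed
  split
  · subst_vars; exact hroot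
  · exact Sym2.mem_mk_left _ _

lemma nxt_mem_Ed {v : V} (hv : v ≠ root) : nxt htree root v ∈ Ed htree root e₀ v := by
  unfold Ed
  rw [if_neg hv]
  exact Sym2.mem_mk_right _ _

lemma Ed_step (he₀ : e₀ ∈ T.edgeSet) (hroot : root ∈ e₀) {v u : V} (h : T.Adj v u) :
    Ed htree root e₀ v = Ed htree root e₀ u ∨
      T.lineGraph.Adj ⟨Ed htree root e₀ v, Ed_mem_edgeSet htree root e₀ he₀ v⟩
        ⟨Ed htree root e₀ u, Ed_mem_edgeSet htree root e₀ he₀ u⟩ := by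
  by_cases heq : Ed htree root e₀ v = Ed htree root e₀ u
  · exact Or.inl heq
  · right
    rw [lineGraph_adj_iff_exists]
    refine ⟨by simpa [Subtype.ext_iff] using heq, ?_⟩
    rcases nxt_eq_or htree root h with hc | hc
    · -- nxt v = u; v ≠ root since nxt root = root ≠ u
      have hv : v ≠ root := by
        rintro rfl
        rw [nxt_root] at hc
        exact h.ne hc
      exact ⟨u, by rw [← hc]; exact nxt_mem_Ed htree root e₀ hv, mem_Ed htree root e₀ hroot u⟩
    · have hu : u ≠ root := by
        rintro rfl
        rw [nxt_root] at hc
        exact h.ne hc.symm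
      exact ⟨v, mem_Ed htree root e₀ hroot v, by rw [← hc]; exact nxt_mem_Ed htree root e₀ hu⟩

/-- Lifting a walk in `T` to a walk in the line graph between the associated edges. -/
lemma walk_lift (he₀ : e₀ ∈ T.edgeSet) (hroot : root ∈ e₀) {v u : V} (w : T.Walk v u) :
    ∃ w' : T.lineGraph.Walk ⟨Ed htree root e₀ v, Ed_mem_edgeSet htree root e₀ he₀ v⟩
      ⟨Ed htree root e₀ u, Ed_mem_edgeSet htree root e₀ he₀ u⟩, w'.length ≤ w.length := by
  induction w with
  | nil => exact ⟨Walk.nil, by simp⟩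
  | @cons a x c hadj p ih =>
    obtain ⟨w', hw'⟩ := ih
    rcases Ed_step htree root e₀ he₀ hroot hadj with heq | hadj'
    · refine ⟨w'.copy (by simp [heq]) rfl, ?_⟩
      simpa using hw'.trans (Nat.le_succ _)
    · exact ⟨Walk.cons hadj' w', by simpa using Nat.succ_le_succ hw'⟩

/-- Every edge of `T` is the associated edge of one of its endpoints. -/
lemma exists_Ed_eq (hroot : root ∈ e₀) {e : Sym2 V} (he : e ∈ T.edgeSet) :
    ∃ v, Ed htree root e₀ v = e := by
  induction e with
  | _ x y =>
    have hadj : T.Adj x y := he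
    rcases nxt_eq_or htree root hadj with hc | hc
    · have hx : x ≠ root := by
        rintro rfl
        rw [nxt_root] at hc
        exact hadj.ne hc
      exact ⟨x, by rw [Ed, if_neg hx, hc]⟩
    · have hy : y ≠ root := by
        rintro rfl
        rw [nxt_root] at hc
        exact hadj.ne hc.symm
      exact ⟨y, by rw [Ed, if_neg hy, hc, Sym2.eq_swap]⟩

end BurnAux

open BurnAux in
/-- For a tree `T` with at least one edge, `b(L(T)) ≤ b(T)`. -/
theorem burningNumber_lineGraph_le_burningNumber_of_isTree {V : Type*} [Fintype V]
    (T : SimpleGraph V) (htree : T.IsTree) (hedge : T.edgeSet.Nonempty) :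
    burningNumber T.lineGraph ≤ burningNumber T := by
  classical
  obtain ⟨e₀, he₀⟩ := hedge
  obtain ⟨root, hroot⟩ : ∃ x, x ∈ e₀ := ⟨e₀.out.1, Sym2.out_fst_mem e₀⟩
  -- the set defining burningNumber T is nonempty
  have hne : {k : ℕ | ∃ b : Fin k → V, IsBurningSeq T b}.Nonempty := by
    refine ⟨Fintype.card V, (Fintype.equivFin V).symm, fun v => ?_⟩
    exact ⟨Fintype.equivFin V v, Walk.nil.copy rfl (by simp), by
      simpa using Nat.succ_le_of_lt (Fintype.equivFin V v).isLt⟩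
  obtain ⟨b, hb⟩ : burningNumber T ∈ {k : ℕ | ∃ b : Fin k → V, IsBurningSeq T b} :=
    Nat.sInf_mem hne
  apply Nat.sInf_le
  refine ⟨fun i => ⟨Ed htree root e₀ (b i), Ed_mem_edgeSet htree root e₀ he₀ _⟩, ?_⟩
  rintro ⟨e, he⟩
  obtain ⟨v, hv⟩ := exists_Ed_eq htree root e₀ hroot he
  obtain ⟨i, w, hw⟩ := hb v
  obtain ⟨w', hw'⟩ := walk_lift htree root e₀ he₀ hroot w
  exact ⟨i, w'.copy (by simp [hv]) rfl, by simp only [Walk.length_copy]; omega⟩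
end

section
/- Let G be a finite connected simple graph and let G_s be its spike graph. Then b(T(G_s)) = b(G) + 1, where T(G_s) is the total graph of G_s. -/
open SimpleGraph

/-- The total graph of `G`, on vertex set `V ⊕ E(G)`: two vertices of `G` are adjacent iff
adjacent in `G`; two edges are adjacent iff distinct and sharing an endpoint; a vertex and
an edge are adjacent iff the vertex is an endpoint of the edge. -/
def totalGraph {V : Type*} (G : SimpleGraph V) : SimpleGraph (V ⊕ G.edgeSet) :=
  SimpleGraph.fromRel (fun x y =>
    match x, y with
    | Sum.inl u, Sum.inl v => G.Adj u v
    | Sum.inr e, Sum.inr f => ∃ v : V, v ∈ (e : Sym2 V) ∧ v ∈ (f : Sym2 V)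
    | Sum.inl v, Sum.inr e => v ∈ (e : Sym2 V)
    | Sum.inr _, Sum.inl _ => False)

/-- The spike graph of `G`: for each vertex `v` of `G` (kept as `Sum.inl v`) a new pendant
vertex `Sum.inr v` is added, adjacent only to `v`. -/
def spikeGraph {V : Type*} (G : SimpleGraph V) : SimpleGraph (V ⊕ V) :=
  SimpleGraph.fromRel (fun x y =>
    match x, y with
    | Sum.inl u, Sum.inl v => G.Adj u v
    | Sum.inl v, Sum.inr w => v = w
    | _, _ => False)

namespace SpikeBurnAux

variable {V : Type*} {G : SimpleGraph V}

lemma spike_adj_ll {u u' : V} :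
    (spikeGraph G).Adj (Sum.inl u) (Sum.inl u') ↔ G.Adj u u' := by
  rw [spikeGraph, fromRel_adj]
  constructor
  · rintro ⟨-, h | h⟩
    · exact h
    · exact h.symm
  · intro h
    exact ⟨by simpa using h.ne, Or.inl h⟩

lemma spike_adj_lr {u w : V} :
    (spikeGraph G).Adj (Sum.inl u) (Sum.inr w) ↔ u = w := by
  rw [spikeGraph, fromRel_adj]
  constructor
  · rintro ⟨-, h | h⟩
    · exact h
    · exact h.elim
  · rintro rfl
    exact ⟨by simp, Or.inl rfl⟩

lemma spike_adj_rr {u w : V} : ¬ (spikeGraph G).Adj (Sum.inr u) (Sum.inr w) := by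
  rw [spikeGraph, fromRel_adj]
  rintro ⟨-, h | h⟩ <;> exact h

lemma total_adj_ll {a b : V ⊕ V} :
    (totalGraph (spikeGraph G)).Adj (Sum.inl a) (Sum.inl b) ↔ (spikeGraph G).Adj a b := by
  rw [totalGraph, fromRel_adj]
  constructor
  · rintro ⟨-, h | h⟩
    · exact h
    · exact h.symm
  · intro h
    exact ⟨by simpa using h.ne, Or.inl h⟩

lemma total_adj_lr {a : V ⊕ V} {e : (spikeGraph G).edgeSet} :
    (totalGraph (spikeGraph G)).Adj (Sum.inl a) (Sum.inr e) ↔ a ∈ (e : Sym2 (V ⊕ V)) := by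
  rw [totalGraph, fromRel_adj]
  constructor
  · rintro ⟨-, h | h⟩
    · exact h
    · exact h.elim
  · intro h
    exact ⟨by simp, Or.inl h⟩

lemma total_adj_rr {e f : (spikeGraph G).edgeSet} :
    (totalGraph (spikeGraph G)).Adj (Sum.inr e) (Sum.inr f) ↔
      e ≠ f ∧ ∃ m, m ∈ (e : Sym2 (V ⊕ V)) ∧ m ∈ (f : Sym2 (V ⊕ V)) := by
  rw [totalGraph, fromRel_adj]
  constructor
  · rintro ⟨hne, h | h⟩
    · exact ⟨fun hef => hne (by rw [hef]), h⟩
    · obtain ⟨m, h1, h2⟩ := h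
      exact ⟨fun hef => hne (by rw [hef]), m, h2, h1⟩
  · rintro ⟨hne, m, h1, h2⟩
    exact ⟨by simpa [Sum.inr.injEq] using hne, Or.inl ⟨m, h1, h2⟩⟩

lemma spike_edge_cases (e : Sym2 (V ⊕ V)) (he : e ∈ (spikeGraph G).edgeSet) :
    (∃ u, e = s(Sum.inl u, Sum.inr u)) ∨
      (∃ x y, G.Adj x y ∧ e = s(Sum.inl x, Sum.inl y)) := by
  induction e using Sym2.ind with
  | _ a b =>
    rw [mem_edgeSet] at he
    match a, b with
    | Sum.inl u, Sum.inl u' => exact Or.inr ⟨u, u', spike_adj_ll.1 he, rfl⟩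
    | Sum.inl u, Sum.inr w =>
        obtain rfl := spike_adj_lr.1 he
        exact Or.inl ⟨u, rfl⟩
    | Sum.inr w, Sum.inl u =>
        obtain rfl := spike_adj_lr.1 he.symm
        exact Or.inl ⟨u, Sym2.eq_swap⟩
    | Sum.inr w, Sum.inr w' =>
        exact absurd he spike_adj_rr

/-- Potential predicate: a walk of the total graph from a source near `v` down to the
vertex `z` with `n` steps yields this projected data. `σ = 0` corresponds to starting at
the leaf `l_v`, `σ = 1` to starting at the pendant edge `e_v`. -/
def Phi (G : SimpleGraph V) (σ : ℕ) (v : V) :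
    (V ⊕ V) ⊕ (spikeGraph G).edgeSet → ℕ → Prop
  | Sum.inl (Sum.inl u), n => ∃ w : G.Walk u v, w.length + 1 ≤ n
  | Sum.inl (Sum.inr u), n => (u = v ∧ σ ≤ n) ∨ ∃ w : G.Walk u v, w.length + 2 ≤ n
  | Sum.inr e, n =>
      (∃ u, (e : Sym2 (V ⊕ V)) = s(Sum.inl u, Sum.inr u) ∧
        ((u = v ∧ 1 ≤ n + σ) ∨ ∃ w : G.Walk u v, w.length + 2 ≤ n + σ)) ∨
      (∃ x y, (e : Sym2 (V ⊕ V)) = s(Sum.inl x, Sum.inl y) ∧ G.Adj x y ∧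
        ∃ w : G.Walk x v, w.length + 2 ≤ n + σ)


lemma helperW {x y u v : V} (hxy : G.Adj x y) (hu : u = x ∨ u = y) (w : G.Walk x v) :
    ∃ w' : G.Walk u v, w'.length ≤ w.length + 1 := by
  rcases hu with rfl | rfl
  · exact ⟨w, Nat.le_succ _⟩
  · exact ⟨Walk.cons hxy.symm w, by simp⟩

lemma helperR {x y u : V} {e : (spikeGraph G).edgeSet}
    (he : (e : Sym2 (V ⊕ V)) = s(Sum.inl x, Sum.inl y)) (hxy : G.Adj x y)
    (hu : u = x ∨ u = y) :
    ∃ y', (e : Sym2 (V ⊕ V)) = s(Sum.inl u, Sum.inl y') ∧ G.Adj u y' := by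
  rcases hu with rfl | rfl
  · exact ⟨y, he, hxy⟩
  · exact ⟨x, he.trans (Sym2.eq_swap), hxy.symm⟩

lemma phi_step {σ : ℕ} (hσ : σ ≤ 1) {v : V}
    {z z₁ : (V ⊕ V) ⊕ (spikeGraph G).edgeSet}
    (h : (totalGraph (spikeGraph G)).Adj z z₁) {n : ℕ}
    (hp : Phi G σ v z₁ n) : Phi G σ v z (n + 1) := by
  obtain (a | e) := z <;> obtain (a₁ | e₁) := z₁
  · -- vertex to vertex
    have hS : (spikeGraph G).Adj a a₁ := total_adj_ll.1 h
    obtain (u | u) := a <;> obtain (u₁ | u₁) := a₁ <;> simp only [Phi] at hp ⊢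
    · -- orig-orig
      obtain ⟨w, hw⟩ := hp
      exact ⟨Walk.cons (spike_adj_ll.1 hS) w, by simp [Walk.length_cons]; omega⟩
    · -- orig u, leaf u₁, u = u₁
      obtain rfl := spike_adj_lr.1 hS
      rcases hp with ⟨rfl, -⟩ | ⟨w, hw⟩
      · exact ⟨Walk.nil, by simp only [Walk.length_nil]; omega⟩
      · exact ⟨w, by omega⟩
    · -- leaf u, orig u₁, u₁ = u
      obtain rfl := spike_adj_lr.1 hS.symm
      obtain ⟨w, hw⟩ := hp
      exact Or.inr ⟨w, by omega⟩
    · exact absurd hS spike_adj_rr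
  · -- vertex to edge
    have hm : a ∈ (e₁ : Sym2 (V ⊕ V)) := total_adj_lr.1 h
    simp only [Phi] at hp
    rcases hp with ⟨u, he, hcl⟩ | ⟨x, y, he, hxy, w, hw⟩
    · rw [he, Sym2.mem_iff] at hm
      rcases hm with rfl | rfl <;> simp only [Phi]
      · -- a = inl u, orig
        rcases hcl with ⟨rfl, h1⟩ | ⟨w, hw⟩
        · exact ⟨Walk.nil, by simp only [Walk.length_nil]; omega⟩
        · exact ⟨w, by omega⟩
      · -- a = inr u, leaf
        rcases hcl with ⟨rfl, h1⟩ | ⟨w, hw⟩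
        · exact Or.inl ⟨rfl, by omega⟩
        · exact Or.inr ⟨w, by omega⟩
    · rw [he, Sym2.mem_iff] at hm
      rcases hm with rfl | rfl <;> simp only [Phi]
      · exact ⟨w, by omega⟩
      · exact ⟨Walk.cons hxy.symm w, by simp only [Walk.length_cons]; omega⟩
  · -- edge to vertex
    have hm : a₁ ∈ (e : Sym2 (V ⊕ V)) := total_adj_lr.1 h.symm
    simp only [Phi] at hp ⊢
    rcases spike_edge_cases (e : Sym2 (V ⊕ V)) e.2 with ⟨u, he⟩ | ⟨x, y, hxy, he⟩
    · rw [he, Sym2.mem_iff] at hm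
      rcases hm with rfl | rfl
      · -- a₁ = inl u, hp orig
        obtain ⟨w, hw⟩ := hp
        exact Or.inl ⟨u, he, Or.inr ⟨w, by omega⟩⟩
      · -- a₁ = inr u, hp leaf
        rcases hp with ⟨rfl, h1⟩ | ⟨w, hw⟩
        · exact Or.inl ⟨u, he, Or.inl ⟨rfl, by omega⟩⟩
        · exact Or.inl ⟨u, he, Or.inr ⟨w, by omega⟩⟩
    · rw [he, Sym2.mem_iff] at hm
      have hm' : a₁ = Sum.inl x ∨ a₁ = Sum.inl y := hm
      rcases hm' with rfl | rfl
      · obtain ⟨w, hw⟩ := hp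
        exact Or.inr ⟨x, y, he, hxy, w, by omega⟩
      · obtain ⟨w, hw⟩ := hp
        exact Or.inr ⟨y, x, he.trans (Sym2.eq_swap), hxy.symm, w, by omega⟩
  · -- edge to edge
    obtain ⟨hne, m, hme, hmf⟩ := total_adj_rr.1 h
    simp only [Phi] at hp ⊢
    rcases spike_edge_cases (e : Sym2 (V ⊕ V)) e.2 with ⟨u, he⟩ | ⟨x, y, hxy, he⟩
    · -- e pendant u
      rw [he, Sym2.mem_iff] at hme
      rcases hp with ⟨u₁, hf, hcl⟩ | ⟨x₁, y₁, hf, hxy₁, w, hw⟩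
      · -- f pendant u₁ : contradiction
        rw [hf, Sym2.mem_iff] at hmf
        exfalso
        apply hne
        apply Subtype.ext
        rw [he, hf]
        rcases hme with rfl | rfl <;> rcases hmf with h' | h' <;>
          first
          | (obtain rfl := Sum.inl.inj h'; rfl)
          | (obtain rfl := Sum.inr.inj h'; rfl)
          | exact absurd h' (by simp)
      · -- f G-edge
        rw [hf, Sym2.mem_iff] at hmf
        have hu : u = x₁ ∨ u = y₁ := by
          rcases hme with rfl | rfl
          · rcases hmf with h' | h' <;> [exact Or.inl (Sum.inl.inj h'); exact Or.inr (Sum.inl.inj h')]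
          · rcases hmf with h' | h' <;> exact absurd h' (by simp)
        obtain ⟨w', hw'⟩ := helperW hxy₁ hu w
        exact Or.inl ⟨u, he, Or.inr ⟨w', by omega⟩⟩
    · -- e G-edge x y
      rw [he, Sym2.mem_iff] at hme
      rcases hp with ⟨u₁, hf, hcl⟩ | ⟨x₁, y₁, hf, hxy₁, w, hw⟩
      · -- f pendant u₁
        rw [hf, Sym2.mem_iff] at hmf
        have hu : u₁ = x ∨ u₁ = y := by
          rcases hmf with h' | h'
          · rcases hme with rfl | rfl <;> [exact Or.inl (Sum.inl.inj h').symm; exact Or.inr (Sum.inl.inj h').symm]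
          · rcases hme with rfl | rfl <;> exact absurd h' (by simp)
        obtain ⟨y', he', hxy'⟩ := helperR he hxy hu
        rcases hcl with ⟨rfl, h1⟩ | ⟨w, hw⟩
        · exact Or.inr ⟨u₁, y', he', hxy', Walk.nil, by simp only [Walk.length_nil]; omega⟩
        · exact Or.inr ⟨u₁, y', he', hxy', w, by omega⟩
      · -- f G-edge
        rw [hf, Sym2.mem_iff] at hmf
        obtain ⟨m', rfl⟩ : ∃ m', m = Sum.inl m' := by
          rcases hmf with h' | h' <;> exact ⟨_, h'⟩
        have hu1 : m' = x₁ ∨ m' = y₁ := by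
          rcases hmf with h' | h' <;> [exact Or.inl (Sum.inl.inj h'); exact Or.inr (Sum.inl.inj h')]
        have hu2 : m' = x ∨ m' = y := by
          rcases hme with h' | h' <;> [exact Or.inl (Sum.inl.inj h'); exact Or.inr (Sum.inl.inj h')]
        obtain ⟨w', hw'⟩ := helperW hxy₁ hu1 w
        obtain ⟨y', he', hxy'⟩ := helperR he hxy hu2
        exact Or.inr ⟨m', y', he', hxy', w', by omega⟩

lemma phi_walk {σ : ℕ} (hσ : σ ≤ 1) {v : V}
    {z z₀ : (V ⊕ V) ⊕ (spikeGraph G).edgeSet}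
    (w : (totalGraph (spikeGraph G)).Walk z z₀)
    (h0 : Phi G σ v z₀ 0) : Phi G σ v z w.length := by
  induction w with
  | nil => exact h0
  | cons h p ih =>
      rw [Walk.length_cons]
      exact phi_step hσ h (ih h0)

def InlMem (G : SimpleGraph V) : (V ⊕ V) ⊕ (spikeGraph G).edgeSet → V → Prop
  | Sum.inl (Sum.inl u), b => b = u
  | Sum.inl (Sum.inr u), b => b = u
  | Sum.inr e, b => Sum.inl b ∈ (e : Sym2 (V ⊕ V))

lemma exists_inlMem (G : SimpleGraph V) (z : (V ⊕ V) ⊕ (spikeGraph G).edgeSet) :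
    ∃ b, InlMem G z b := by
  obtain ((u | u) | e) := z
  · exact ⟨u, rfl⟩
  · exact ⟨u, rfl⟩
  · rcases spike_edge_cases (e : Sym2 (V ⊕ V)) e.2 with ⟨u, he⟩ | ⟨x, y, hxy, he⟩
    · exact ⟨u, by simp only [InlMem]; rw [he]; simp⟩
    · exact ⟨x, by simp only [InlMem]; rw [he]; simp⟩

lemma compat_use {k : ℕ} {c : Fin k → (V ⊕ V) ⊕ (spikeGraph G).edgeSet}
    {a : Fin (k-1) → V}
    (ha : ∀ j : Fin (k-1), InlMem G (c (Fin.castLE (Nat.sub_le k 1) j)) (a j))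
    (i : Fin k) (hj : (i : ℕ) < k - 1) :
    InlMem G (c i) (a ⟨(i : ℕ), hj⟩) := by
  have h := ha ⟨(i : ℕ), hj⟩
  have hcast : Fin.castLE (Nat.sub_le k 1) (⟨(i : ℕ), hj⟩ : Fin (k-1)) = i := Fin.ext rfl
  rwa [hcast] at h

lemma step1 {k : ℕ} (hk : 1 ≤ k) (c : Fin k → (V ⊕ V) ⊕ (spikeGraph G).edgeSet)
    (hc : IsBurningSeq (totalGraph (spikeGraph G)) c)
    (a : Fin (k-1) → V)
    (ha : ∀ j : Fin (k-1), InlMem G (c (Fin.castLE (Nat.sub_le k 1) j)) (a j)) (v : V) :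
    (∃ j : Fin (k-1), ∃ w : G.Walk v (a j), w.length + (j : ℕ) + 1 ≤ k - 1) ∨
      c ⟨k-1, by omega⟩ = Sum.inl (Sum.inr v) := by
  obtain ⟨i, w, hw⟩ := hc (Sum.inl (Sum.inr v))
  have h0 : Phi G 0 v (Sum.inl (Sum.inr v)) 0 := Or.inl ⟨rfl, le_refl 0⟩
  have hphi : Phi G 0 v (c i) w.reverse.length := phi_walk (by omega) w.reverse h0
  rw [Walk.length_reverse] at hphi
  generalize hN : w.length = N at hphi hw
  clear hN w h0
  rcases hz : c i with (u | u) | e <;> rw [hz] at hphi <;> simp only [Phi] at hphi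
  · -- orig u
    obtain ⟨wG, hG⟩ := hphi
    have hj : (i : ℕ) < k - 1 := by omega
    refine Or.inl ⟨⟨(i : ℕ), hj⟩, ?_⟩
    have hA := compat_use ha i hj
    rw [hz] at hA
    rw [show a ⟨(i : ℕ), hj⟩ = u from hA]
    exact ⟨wG.reverse, by simp only [Walk.length_reverse, Fin.val_mk]; omega⟩
  · -- leaf u
    rcases hphi with ⟨rfl, -⟩ | ⟨wG, hG⟩
    · by_cases hik : (i : ℕ) < k - 1
      · refine Or.inl ⟨⟨(i : ℕ), hik⟩, ?_⟩
        have hA := compat_use ha i hik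
        rw [hz] at hA
        rw [show a ⟨(i : ℕ), hik⟩ = u from hA]
        exact ⟨Walk.nil, by simp only [Walk.length_nil, Fin.val_mk]; omega⟩
      · right
        have hieq : i = ⟨k-1, by omega⟩ := Fin.ext (by simp only [Fin.val_mk]; omega)
        rw [← hieq, hz]
    · have hj : (i : ℕ) < k - 1 := by omega
      refine Or.inl ⟨⟨(i : ℕ), hj⟩, ?_⟩
      have hA := compat_use ha i hj
      rw [hz] at hA
      rw [show a ⟨(i : ℕ), hj⟩ = u from hA]
      exact ⟨wG.reverse, by simp only [Walk.length_reverse, Fin.val_mk]; omega⟩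
  · -- edge
    rcases hphi with ⟨u, he, ⟨rfl, h1⟩ | ⟨wG, hG⟩⟩ | ⟨x, y, he, hxy, wG, hG⟩
    · -- pendant, u = v
      have hj : (i : ℕ) < k - 1 := by omega
      refine Or.inl ⟨⟨(i : ℕ), hj⟩, ?_⟩
      have hA := compat_use ha i hj
      rw [hz] at hA
      have hA' : Sum.inl (a ⟨(i : ℕ), hj⟩) ∈ (e : Sym2 (V ⊕ V)) := hA
      rw [he, Sym2.mem_iff] at hA'
      have hav : a ⟨(i : ℕ), hj⟩ = u := by
        rcases hA' with h' | h'
        · exact Sum.inl.inj h'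
        · exact absurd h' (by simp)
      rw [hav]
      exact ⟨Walk.nil, by simp only [Walk.length_nil, Fin.val_mk]; omega⟩
    · -- pendant, far
      have hj : (i : ℕ) < k - 1 := by omega
      refine Or.inl ⟨⟨(i : ℕ), hj⟩, ?_⟩
      have hA := compat_use ha i hj
      rw [hz] at hA
      have hA' : Sum.inl (a ⟨(i : ℕ), hj⟩) ∈ (e : Sym2 (V ⊕ V)) := hA
      rw [he, Sym2.mem_iff] at hA'
      have hav : a ⟨(i : ℕ), hj⟩ = u := by
        rcases hA' with h' | h'
        · exact Sum.inl.inj h'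
        · exact absurd h' (by simp)
      rw [hav]
      exact ⟨wG.reverse, by simp only [Walk.length_reverse, Fin.val_mk]; omega⟩
    · -- G-edge
      have hj : (i : ℕ) < k - 1 := by omega
      refine Or.inl ⟨⟨(i : ℕ), hj⟩, ?_⟩
      have hA := compat_use ha i hj
      rw [hz] at hA
      have hA' : Sum.inl (a ⟨(i : ℕ), hj⟩) ∈ (e : Sym2 (V ⊕ V)) := hA
      rw [he, Sym2.mem_iff] at hA'
      have hu : a ⟨(i : ℕ), hj⟩ = x ∨ a ⟨(i : ℕ), hj⟩ = y := by
        rcases hA' with h' | h'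
        · exact Or.inl (Sum.inl.inj h')
        · exact Or.inr (Sum.inl.inj h')
      rcases hu with hax | hay
      · rw [hax]
        exact ⟨wG.reverse, by simp only [Walk.length_reverse, Fin.val_mk]; omega⟩
      · rw [hay]
        exact ⟨wG.reverse.concat hxy, by simp only [Walk.length_concat, Walk.length_reverse, Fin.val_mk]; omega⟩

lemma step2 {k : ℕ} (hk : 1 ≤ k) (c : Fin k → (V ⊕ V) ⊕ (spikeGraph G).edgeSet)
    (hc : IsBurningSeq (totalGraph (spikeGraph G)) c) (v : V)
    (hlast : c ⟨k-1, by omega⟩ = Sum.inl (Sum.inr v)) :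
    ∃ j : Fin k, (j : ℕ) < k - 1 ∧ ∃ b : V, InlMem G (c j) b ∧
      ∃ w : G.Walk v b, w.length + (j : ℕ) + 1 ≤ k - 1 := by
  have hpe : s(Sum.inl v, Sum.inr v) ∈ (spikeGraph G).edgeSet := by
    rw [mem_edgeSet]; exact spike_adj_lr.2 rfl
  obtain ⟨m, w, hw⟩ := hc (Sum.inr ⟨s(Sum.inl v, Sum.inr v), hpe⟩)
  have h0 : Phi G 1 v (Sum.inr ⟨s(Sum.inl v, Sum.inr v), hpe⟩) 0 :=
    Or.inl ⟨v, rfl, Or.inl ⟨rfl, by omega⟩⟩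
  have hphi : Phi G 1 v (c m) w.reverse.length := phi_walk (le_refl 1) w.reverse h0
  rw [Walk.length_reverse] at hphi
  generalize hN : w.length = N at hphi hw
  clear hN w h0
  rcases hz : c m with (u | u) | e <;> rw [hz] at hphi <;> simp only [Phi] at hphi
  · -- orig u
    obtain ⟨wG, hG⟩ := hphi
    refine ⟨m, by omega, u, by rw [hz]; rfl, wG.reverse, by rw [Walk.length_reverse]; omega⟩
  · -- leaf u
    rcases hphi with ⟨rfl, h1⟩ | ⟨wG, hG⟩
    · exact ⟨m, by omega, u, by rw [hz]; rfl, Walk.nil, by simp only [Walk.length_nil]; omega⟩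
    · exact ⟨m, by omega, u, by rw [hz]; rfl, wG.reverse, by rw [Walk.length_reverse]; omega⟩
  · -- edge
    rcases hphi with ⟨u, he, ⟨rfl, h1⟩ | ⟨wG, hG⟩⟩ | ⟨x, y, he, hxy, wG, hG⟩
    · -- pendant with u = v
      have hm : (m : ℕ) < k - 1 := by
        by_contra hcon
        have hmeq : m = ⟨k-1, by omega⟩ := Fin.ext (by simp only [Fin.val_mk]; omega)
        rw [hmeq, hlast] at hz
        exact absurd hz (by simp)
      refine ⟨m, hm, u, ?_, Walk.nil, by simp only [Walk.length_nil]; omega⟩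
      rw [hz]
      show Sum.inl u ∈ (_ : Sym2 (V ⊕ V))
      rw [he]; simp
    · -- pendant far
      refine ⟨m, by omega, u, ?_, wG.reverse, by rw [Walk.length_reverse]; omega⟩
      rw [hz]
      show Sum.inl u ∈ (_ : Sym2 (V ⊕ V))
      rw [he]; simp
    · -- G-edge
      refine ⟨m, by omega, x, ?_, wG.reverse, by rw [Walk.length_reverse]; omega⟩
      rw [hz]
      show Sum.inl x ∈ (_ : Sym2 (V ⊕ V))
      rw [he]; simp

lemma lower {k : ℕ} (hk : 1 ≤ k) (c : Fin k → (V ⊕ V) ⊕ (spikeGraph G).edgeSet)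
    (hc : IsBurningSeq (totalGraph (spikeGraph G)) c) :
    ∃ a : Fin (k-1) → V, IsBurningSeq G a := by
  classical
  choose p hp using exists_inlMem G
  by_cases hL : ∃ v₀, c ⟨k-1, by omega⟩ = Sum.inl (Sum.inr v₀)
  · obtain ⟨v₀, hv₀⟩ := hL
    obtain ⟨j₀, hj₀, b₀, hb₀, w₀, hw₀⟩ := step2 hk c hc v₀ hv₀
    set a : Fin (k-1) → V :=
      Function.update (fun j => p (c (Fin.castLE (Nat.sub_le k 1) j))) ⟨(j₀ : ℕ), hj₀⟩ b₀
      with hadef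
    have ha : ∀ j : Fin (k-1), InlMem G (c (Fin.castLE (Nat.sub_le k 1) j)) (a j) := by
      intro j
      by_cases h : j = ⟨(j₀ : ℕ), hj₀⟩
      · subst h
        rw [hadef, Function.update_self]
        have hcast : Fin.castLE (Nat.sub_le k 1) (⟨(j₀ : ℕ), hj₀⟩ : Fin (k-1)) = j₀ :=
          Fin.ext rfl
        rw [hcast]
        exact hb₀
      · rw [hadef, Function.update_of_ne h]
        exact hp _
    refine ⟨a, ?_⟩
    intro v
    rcases step1 hk c hc a ha v with ⟨j, wv, hj⟩ | hlast
    · exact ⟨j, wv, hj⟩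
    · have hvv : v₀ = v := Sum.inr.inj (Sum.inl.inj (hv₀.symm.trans hlast))
      subst hvv
      refine ⟨⟨(j₀ : ℕ), hj₀⟩, ?_⟩
      have haj : a ⟨(j₀ : ℕ), hj₀⟩ = b₀ := by rw [hadef, Function.update_self]
      rw [haj]
      exact ⟨w₀, by simp only [Fin.val_mk]; omega⟩
  · refine ⟨fun j => p (c (Fin.castLE (Nat.sub_le k 1) j)), ?_⟩
    intro v
    rcases step1 hk c hc _ (fun j => hp _) v with ⟨j, wv, hj⟩ | hlast
    · exact ⟨j, wv, hj⟩
    · exact absurd ⟨v, hlast⟩ hL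

def nodeHom : G →g totalGraph (spikeGraph G) where
  toFun u := Sum.inl (Sum.inl u)
  map_rel' h := total_adj_ll.2 (spike_adj_ll.2 h)

lemma upper {k : ℕ} (hk : 1 ≤ k) (b : Fin k → V) (hb : IsBurningSeq G b) :
    ∃ cT : Fin (k+1) → (V ⊕ V) ⊕ (spikeGraph G).edgeSet,
      IsBurningSeq (totalGraph (spikeGraph G)) cT := by
  refine ⟨fun j => Sum.inl (Sum.inl (b ⟨min (j : ℕ) (k-1), by omega⟩)), ?_⟩
  have key : ∀ (u : V) (z : (V ⊕ V) ⊕ (spikeGraph G).edgeSet),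
      (totalGraph (spikeGraph G)).Adj z (Sum.inl (Sum.inl u)) ∨ z = Sum.inl (Sum.inl u) →
      ∃ i : Fin (k+1),
        ∃ w : (totalGraph (spikeGraph G)).Walk z
          (Sum.inl (Sum.inl (b ⟨min (i : ℕ) (k-1), by omega⟩))),
          w.length + (i : ℕ) + 1 ≤ k + 1 := by
    intro u z hz
    obtain ⟨i, w, hw⟩ := hb u
    refine ⟨⟨(i : ℕ), by omega⟩, ?_⟩
    have hieq : (⟨min ((⟨(i : ℕ), by omega⟩ : Fin (k+1)) : ℕ) (k-1), by omega⟩ : Fin k) = i :=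
      Fin.ext (by simp only [Fin.val_mk]; omega)
    rw [hieq]
    rcases hz with hadj | rfl
    · exact ⟨Walk.cons hadj (w.map nodeHom),
        by erw [Walk.length_cons, Walk.length_map]; simp only [Fin.val_mk]; omega⟩
    · exact ⟨w.map nodeHom, by erw [Walk.length_map]; simp only [Fin.val_mk]; omega⟩
  intro z
  obtain ((u | u) | e) := z
  · exact key u _ (Or.inr rfl)
  · exact key u _ (Or.inl (total_adj_ll.2 (spike_adj_lr.2 rfl).symm))
  · rcases spike_edge_cases (e : Sym2 (V ⊕ V)) e.2 with ⟨u, he⟩ | ⟨x, y, hxy, he⟩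
    · refine key u _ (Or.inl ?_)
      exact (total_adj_lr.2 (by rw [he]; simp)).symm
    · refine key x _ (Or.inl ?_)
      exact (total_adj_lr.2 (by rw [he]; simp)).symm

lemma exists_burn (G : SimpleGraph V) [Fintype V] :
    ∃ b : Fin (Fintype.card V) → V, IsBurningSeq G b := by
  refine ⟨fun i => (Fintype.equivFin V).symm i, fun v => ?_⟩
  refine ⟨Fintype.equivFin V v, Walk.nil.copy rfl (Equiv.symm_apply_apply _ _).symm, ?_⟩
  have := (Fintype.equivFin V v).isLt
  simp only [Walk.length_copy, Walk.length_nil]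
  omega

theorem burningNumber_totalGraph_spikeGraph' {V : Type*} [Fintype V]
    (G : SimpleGraph V) (hconn : G.Connected) :
    burningNumber (totalGraph (spikeGraph G)) = burningNumber G + 1 := by
  classical
  obtain ⟨v₀⟩ := hconn.nonempty
  have hGne : {k : ℕ | ∃ b : Fin k → V, IsBurningSeq G b}.Nonempty :=
    ⟨Fintype.card V, exists_burn G⟩
  have hGmem : ∃ bG : Fin (burningNumber G) → V, IsBurningSeq G bG := Nat.sInf_mem hGne
  obtain ⟨bG, hbG⟩ := hGmem
  have hkG1 : 1 ≤ burningNumber G := by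
    obtain ⟨i, -, -⟩ := hbG v₀
    have := i.isLt
    omega
  obtain ⟨cT, hcT⟩ := upper hkG1 bG hbG
  have hTne : {k : ℕ | ∃ c : Fin k → (V ⊕ V) ⊕ (spikeGraph G).edgeSet,
      IsBurningSeq (totalGraph (spikeGraph G)) c}.Nonempty :=
    ⟨burningNumber G + 1, cT, hcT⟩
  have hTmem : ∃ c : Fin (burningNumber (totalGraph (spikeGraph G))) →
      (V ⊕ V) ⊕ (spikeGraph G).edgeSet,
      IsBurningSeq (totalGraph (spikeGraph G)) c := Nat.sInf_mem hTne
  obtain ⟨c, hc⟩ := hTmem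
  have hkT1 : 1 ≤ burningNumber (totalGraph (spikeGraph G)) := by
    obtain ⟨i, -, -⟩ := hc (Sum.inl (Sum.inl v₀))
    have := i.isLt
    omega
  obtain ⟨a, ha⟩ := lower hkT1 c hc
  have h2 : burningNumber G ≤ burningNumber (totalGraph (spikeGraph G)) - 1 :=
    Nat.sInf_le ⟨a, ha⟩
  have h1 : burningNumber (totalGraph (spikeGraph G)) ≤ burningNumber G + 1 :=
    Nat.sInf_le ⟨cT, hcT⟩
  omega


end SpikeBurnAux

/-- For a connected graph `G` with spike graph `Gₛ`, we have `b(T(Gₛ)) = b(G) + 1`. -/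
theorem burningNumber_totalGraph_spikeGraph {V : Type*} [Fintype V]
    (G : SimpleGraph V) (hconn : G.Connected) :
    burningNumber (totalGraph (spikeGraph G)) = burningNumber G + 1 :=
  SpikeBurnAux.burningNumber_totalGraph_spikeGraph' G hconn
end

section
/- For every integer n ≥ 1, the path P on n² + 1 vertices satisfies b(P) = n + 1 and b(L(P)) = n, where L(P) is the line graph of P. In particular, the lower bound b(G) − 1 ≤ b(L(G)) is attained with equality for these paths. -/
open SimpleGraph

section Aux

set_option linter.unreachableTactic false
set_option linter.unusedTactic false
set_option linter.unnecessarySeqFocus false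

/-! ### Walks in path graphs -/

lemma pg_walk_exists_aux (m : ℕ) : ∀ (d : ℕ) (i j : Fin m), (j : ℕ) = (i : ℕ) + d →
    ∃ w : (pathGraph m).Walk i j, w.length = d := by
  intro d
  induction d with
  | zero =>
    intro i j h
    have : i = j := Fin.ext (by omega)
    subst this
    exact ⟨SimpleGraph.Walk.nil, rfl⟩
  | succ d ih =>
    intro i j h
    have hi : (i : ℕ) + 1 < m := by have := j.isLt; omega
    have hadj : (pathGraph m).Adj i ⟨(i : ℕ) + 1, hi⟩ := pathGraph_adj.mpr (Or.inl rfl)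
    obtain ⟨w, hw⟩ := ih ⟨(i : ℕ) + 1, hi⟩ j (by simp; omega)
    exact ⟨SimpleGraph.Walk.cons hadj w, by simp [hw]⟩

lemma pg_walk_exists {m : ℕ} (i j : Fin m) :
    ∃ w : (pathGraph m).Walk i j, w.length = Nat.dist (i : ℕ) (j : ℕ) := by
  rcases le_or_gt (i : ℕ) (j : ℕ) with h | h
  · obtain ⟨w, hw⟩ := pg_walk_exists_aux m ((j : ℕ) - (i : ℕ)) i j (by omega)
    exact ⟨w, by simp [hw, Nat.dist]; omega⟩
  · obtain ⟨w, hw⟩ := pg_walk_exists_aux m ((i : ℕ) - (j : ℕ)) j i (by omega)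
    exact ⟨w.reverse, by simp [hw, Nat.dist]; omega⟩

lemma pg_walk_ge {m : ℕ} {i j : Fin m} (w : (pathGraph m).Walk i j) :
    Nat.dist (i : ℕ) (j : ℕ) ≤ w.length := by
  induction w with
  | nil => simp [Nat.dist]
  | cons h p ih =>
    rw [pathGraph_adj] at h
    simp only [SimpleGraph.Walk.length_cons]
    simp [Nat.dist] at ih ⊢
    omega

/-! ### Lower bound via counting -/

lemma sum_odd (k : ℕ) : ∑ i ∈ Finset.range k, (2 * i + 1) = k * k := by
  induction k with
  | zero => simp
  | succ k ih => rw [Finset.sum_range_succ, ih]; ring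

lemma card_ball (m c r : ℕ) :
    (Finset.univ.filter (fun v : Fin m => Nat.dist (v : ℕ) c ≤ r)).card ≤ 2 * r + 1 := by
  classical
  have := Finset.card_le_card_of_injOn
    (s := Finset.univ.filter (fun v : Fin m => Nat.dist (v : ℕ) c ≤ r))
    (f := fun v : Fin m => (v : ℕ) + r - c)
    (t := Finset.range (2 * r + 1)) ?_ ?_
  · simpa using this
  · intro v hv
    replace hv := (Finset.mem_filter.mp hv).2
    simp only [Finset.mem_filter, Finset.mem_univ, true_and, Nat.dist] at hv
    simp only [Finset.coe_range, Set.mem_Iio]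
    omega
  · intro v1 h1 v2 h2 he
    simp only [Finset.coe_filter, Set.mem_setOf_eq, Finset.mem_univ, true_and, Nat.dist] at h1 h2
    have he' : (v1 : ℕ) + r - c = (v2 : ℕ) + r - c := he
    replace h1 := (Finset.mem_filter.mp h1).2
    replace h2 := (Finset.mem_filter.mp h2).2
    exact Fin.ext (by omega)

lemma burn_lower {m k : ℕ} (b : Fin k → Fin m) (hb : IsBurningSeq (pathGraph m) b) :
    m ≤ k * k := by
  classical
  have hcov : ∀ v : Fin m, ∃ i : Fin k, Nat.dist (v : ℕ) ((b i : Fin m) : ℕ) + (i : ℕ) + 1 ≤ k := by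
    intro v
    obtain ⟨i, w, hw⟩ := hb v
    exact ⟨i, by have := pg_walk_ge w; omega⟩
  calc m = (Finset.univ : Finset (Fin m)).card := by simp
    _ ≤ (Finset.univ.biUnion (fun i : Fin k =>
          Finset.univ.filter (fun v : Fin m => Nat.dist (v : ℕ) ((b i : Fin m) : ℕ) ≤ k - 1 - (i : ℕ)))).card := by
        apply Finset.card_le_card
        intro v _
        obtain ⟨i, hi⟩ := hcov v
        exact Finset.mem_biUnion.mpr ⟨i, Finset.mem_univ i, by simp; omega⟩
    _ ≤ ∑ i : Fin k, (Finset.univ.filter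
          (fun v : Fin m => Nat.dist (v : ℕ) ((b i : Fin m) : ℕ) ≤ k - 1 - (i : ℕ))).card :=
        Finset.card_biUnion_le
    _ ≤ ∑ i : Fin k, (2 * (k - 1 - (i : ℕ)) + 1) :=
        Finset.sum_le_sum (fun i _ => card_ball m _ _)
    _ = ∑ i ∈ Finset.range k, (2 * (k - 1 - i) + 1) :=
        Fin.sum_univ_eq_sum_range (fun i => 2 * (k - 1 - i) + 1) k
    _ = ∑ i ∈ Finset.range k, (2 * i + 1) := by
        rw [← Finset.sum_range_reflect]
        apply Finset.sum_congr rfl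
        intro i hi
        simp only [Finset.mem_range] at hi
        congr 1
        omega
    _ = k * k := sum_odd k

/-! ### Upper bound via explicit burning sequence -/

lemma arith_ball {K J j v m : ℕ} (h1 : J ≤ K - 1 - v) (h2 : K - 1 - v ≤ J + 2 * j)
    (hv : v < m) (hm : m ≤ K) :
    Nat.dist v (min (K - (J + 2 * j + 1) + j) (m - 1)) ≤ j := by
  simp [Nat.dist]
  omega

lemma burn_upper {m k : ℕ} (hm : 1 ≤ m) (hk : m ≤ k * k) :
    ∃ b : Fin k → Fin m, IsBurningSeq (pathGraph m) b := by
  refine ⟨fun i => ⟨min (k * k - (k - (i : ℕ)) * (k - (i : ℕ)) + (k - 1 - (i : ℕ))) (m - 1),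
    Nat.lt_of_le_of_lt (min_le_right _ _) (by omega)⟩, ?_⟩
  intro v
  have hk1 : 1 ≤ k := by
    rcases Nat.eq_zero_or_pos k with h | h
    · subst h; simp at hk; omega
    · exact h
  set t := k * k - 1 - (v : ℕ) with ht
  set j := Nat.sqrt t with hj
  have h1 : j * j ≤ t := Nat.sqrt_le t
  have h2 : t < (j + 1) * (j + 1) := Nat.lt_succ_sqrt t
  have hjk : j < k := by
    rw [hj, Nat.sqrt_lt']
    have hvm := v.isLt
    have hK1 : 1 ≤ k * k := hm.trans hk
    rw [pow_two]
    omega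
  have hlt : k - 1 - j < k := by omega
  have e1 : k - (k - 1 - j) = j + 1 := by omega
  have e2 : k - 1 - (k - 1 - j) = j := by omega
  have e3 : (j + 1) * (j + 1) = j * j + 2 * j + 1 := by ring
  have hcm : min (k * k - (j * j + 2 * j + 1) + j) (m - 1) < m :=
    Nat.lt_of_le_of_lt (min_le_right _ _) (by omega)
  refine ⟨⟨k - 1 - j, hlt⟩, ?_⟩
  have key : (⟨min (k * k - (k - ((⟨k - 1 - j, hlt⟩ : Fin k) : ℕ)) * (k - ((⟨k - 1 - j, hlt⟩ : Fin k) : ℕ)) + (k - 1 - ((⟨k - 1 - j, hlt⟩ : Fin k) : ℕ))) (m - 1),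
      Nat.lt_of_le_of_lt (min_le_right _ _) (by omega)⟩ : Fin m)
      = ⟨min (k * k - (j * j + 2 * j + 1) + j) (m - 1), hcm⟩ := by
    apply Fin.ext
    simp only [Fin.val_mk, e1, e2, e3]
  have hdist : Nat.dist (v : ℕ) (min (k * k - (j * j + 2 * j + 1) + j) (m - 1)) ≤ j := by
    have h2' : k * k - 1 - (v : ℕ) ≤ j * j + 2 * j := by omega
    exact arith_ball h1 h2' v.isLt hk
  obtain ⟨w, hw⟩ := pg_walk_exists v (⟨min (k * k - (j * j + 2 * j + 1) + j) (m - 1), hcm⟩ : Fin m)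
  refine ⟨w.copy rfl key.symm, ?_⟩
  have hw2 : w.length ≤ j := by rw [hw]; exact hdist
  rw [SimpleGraph.Walk.length_copy]
  show w.length + (k - 1 - j) + 1 ≤ k
  omega

/-! ### Burning number of path graphs -/

lemma burningNumber_pathGraph_eq {m k : ℕ} (hm : 1 ≤ m) (hup : m ≤ k * k)
    (hlo : (k - 1) * (k - 1) < m) : burningNumber (pathGraph m) = k := by
  have hne : k ∈ {k : ℕ | ∃ b : Fin k → Fin m, IsBurningSeq (pathGraph m) b} :=
    burn_upper hm hup
  apply le_antisymm
  · exact Nat.sInf_le hne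
  · apply le_csInf ⟨k, hne⟩
    rintro j ⟨b, hb⟩
    have hml := burn_lower b hb
    by_contra h
    push_neg at h
    have hmul : j * j ≤ (k - 1) * (k - 1) := Nat.mul_le_mul (by omega) (by omega)
    exact lt_irrefl m (lt_of_le_of_lt (hml.trans hmul) hlo)

/-! ### Invariance under isomorphism -/

lemma isBurningSeq_map {V W : Type*} {G : SimpleGraph V} {H : SimpleGraph W} (φ : G ≃g H)
    {k : ℕ} {b : Fin k → V} (h : IsBurningSeq G b) : IsBurningSeq H (fun i => φ (b i)) := by
  intro v
  obtain ⟨i, w, hw⟩ := h (φ.symm v)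
  refine ⟨i, (w.map φ.toHom).copy (φ.apply_symm_apply v) rfl, ?_⟩
  rwa [SimpleGraph.Walk.length_copy, SimpleGraph.Walk.length_map]

lemma burningNumber_eq_of_iso {V W : Type*} {G : SimpleGraph V} {H : SimpleGraph W}
    (φ : G ≃g H) : burningNumber G = burningNumber H := by
  unfold burningNumber
  congr 1
  ext k
  constructor
  · rintro ⟨b, hb⟩; exact ⟨fun i => φ (b i), isBurningSeq_map φ hb⟩
  · rintro ⟨b, hb⟩; exact ⟨fun i => φ.symm (b i), isBurningSeq_map φ.symm hb⟩

/-! ### The line graph of a path is a path -/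

def pathEdge (m : ℕ) (i : Fin m) : (pathGraph (m + 1)).edgeSet :=
  ⟨s(i.castSucc, i.succ), by
    rw [SimpleGraph.mem_edgeSet, pathGraph_adj]
    left
    simp⟩

lemma pathEdge_bij (m : ℕ) : Function.Bijective (pathEdge m) := by
  constructor
  · intro i j h
    have h' : s(i.castSucc, i.succ) = s(j.castSucc, j.succ) := Subtype.ext_iff.mp h
    rw [Sym2.eq_iff] at h'
    rcases h' with ⟨h1, h2⟩ | ⟨h1, h2⟩
    · exact Fin.ext (by simpa using congrArg Fin.val h1)
    · have e1 := congrArg Fin.val h1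
      have e2 := congrArg Fin.val h2
      simp [Fin.val_succ] at e1 e2
      exact Fin.ext (by omega)
  · rintro ⟨e, he⟩
    induction e with
    | h u v =>
      rw [SimpleGraph.mem_edgeSet, pathGraph_adj] at he
      rcases he with h | h
      · have hu : (u : ℕ) < m := by have := v.isLt; omega
        refine ⟨⟨(u : ℕ), hu⟩, ?_⟩
        apply Subtype.ext
        show s(_, _) = s(u, v)
        congr 1
        exact Fin.ext (by simp only [Fin.coe_castSucc, Fin.val_succ, Fin.val_mk] <;> omega)
      · have hv : (v : ℕ) < m := by have := u.isLt; omega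
        refine ⟨⟨(v : ℕ), hv⟩, ?_⟩
        apply Subtype.ext
        show s(_, _) = s(u, v)
        rw [Sym2.eq_swap]
        congr 1
        exact Fin.ext (by simp only [Fin.coe_castSucc, Fin.val_succ, Fin.val_mk] <;> omega)

lemma pathEdge_adj (m : ℕ) (i j : Fin m) :
    (pathGraph (m + 1)).lineGraph.Adj (pathEdge m i) (pathEdge m j) ↔ (pathGraph m).Adj i j := by
  rw [SimpleGraph.lineGraph_adj_iff_exists, pathGraph_adj]
  constructor
  · rintro ⟨hne, x, hx1, hx2⟩
    have hij : i ≠ j := fun h => hne (by rw [h])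
    have hij' : (i : ℕ) ≠ (j : ℕ) := fun h => hij (Fin.ext h)
    simp only [pathEdge, Sym2.mem_iff] at hx1 hx2
    rcases hx1 with h1 | h1 <;> rcases hx2 with h2 | h2 <;>
      (have := congrArg Fin.val (h1.symm.trans h2); simp [Fin.val_succ] at this; omega)
  · intro h
    constructor
    · intro he
      have := (pathEdge_bij m).injective he
      subst this
      omega
    · rcases h with h | h
      · exact ⟨i.succ, by simp [pathEdge], by
          simp [pathEdge]; left; exact Fin.ext (by simp [Fin.val_succ]; omega)⟩
      · exact ⟨i.castSucc, by simp [pathEdge], by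
          simp [pathEdge]; right; exact Fin.ext (by simp [Fin.val_succ]; omega)⟩

noncomputable def pathLineIso (m : ℕ) : pathGraph m ≃g (pathGraph (m + 1)).lineGraph where
  toEquiv := Equiv.ofBijective (pathEdge m) (pathEdge_bij m)
  map_rel_iff' := by
    intro i j
    simp only [Equiv.ofBijective_apply]
    exact pathEdge_adj m i j

end Aux

/-- For `n ≥ 1`, the path `P` on `n² + 1` vertices satisfies `b(P) = n + 1` and
`b(L(P)) = n`; in particular `b(P) - 1 = b(L(P))`, so the lower bound
`b(G) - 1 ≤ b(L(G))` is attained with equality. -/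
theorem burningNumber_pathGraph_sq_add_one (n : ℕ) (hn : 1 ≤ n) :
    burningNumber (pathGraph (n ^ 2 + 1)) = n + 1 ∧
      burningNumber (pathGraph (n ^ 2 + 1)).lineGraph = n := by
  have hsq : n ^ 2 = n * n := by ring
  constructor
  · apply burningNumber_pathGraph_eq
    · omega
    · rw [hsq]; nlinarith
    · simp only [Nat.add_sub_cancel]; omega
  · rw [← burningNumber_eq_of_iso (pathLineIso (n ^ 2))]
    apply burningNumber_pathGraph_eq
    · rw [hsq]; nlinarith
    · rw [hsq]
    · rw [hsq]
      have : (n - 1) * (n - 1) + n ≤ n * n := by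
        rcases Nat.exists_eq_add_of_le hn with ⟨d, rfl⟩
        simp only [Nat.add_sub_cancel_left]
        ring_nf
        omega
      omega
end

section
/- For every integer n ≥ 5, the complete graph K_n satisfies b(K_n) = 2 and b(L(K_n)) = 3, where L(K_n) is the line graph of K_n. In particular, the upper bound b(L(G)) ≤ b(G) + 1 is attained with equality for these complete graphs. -/
open SimpleGraph

lemma walk_le_one {V : Type*} {G : SimpleGraph V} {u v : V} (w : G.Walk u v)
    (h : w.length ≤ 1) : u = v ∨ G.Adj u v := by
  cases w with
  | nil => exact Or.inl rfl
  | cons h' p =>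
    simp only [Walk.length_cons] at h
    right
    have : p.length = 0 := by omega
    rw [Walk.eq_of_length_eq_zero this] at h'
    exact h'

set_option maxHeartbeats 1000000 in
/-- For `n ≥ 5`, the complete graph `K_n` satisfies `b(K_n) = 2` and `b(L(K_n)) = 3`;
in particular the upper bound `b(L(G)) ≤ b(G) + 1` is attained with equality. -/
theorem burningNumber_completeGraph (n : ℕ) (hn : 5 ≤ n) :
    burningNumber (completeGraph (Fin n)) = 2 ∧
      burningNumber (completeGraph (Fin n)).lineGraph = 3 := by
  have hne : ∀ (a b : Fin n), (a : ℕ) ≠ (b : ℕ) → a ≠ b :=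
    fun a b h hab => h (congrArg Fin.val hab)
  set v0 : Fin n := ⟨0, by omega⟩ with hv0
  set v1 : Fin n := ⟨1, by omega⟩ with hv1
  set v2 : Fin n := ⟨2, by omega⟩ with hv2
  set v3 : Fin n := ⟨3, by omega⟩ with hv3
  set G := completeGraph (Fin n) with hG
  have hadj : ∀ x y : Fin n, x ≠ y → G.Adj x y := fun x y h => h
  have mem2 : ∃ b : Fin 2 → Fin n, IsBurningSeq G b := by
    refine ⟨fun _ => v0, fun v => ⟨0, ?_⟩⟩
    by_cases hv : v = v0
    · subst hv; exact ⟨Walk.nil, by simp⟩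
    · exact ⟨Walk.cons (hadj v v0 hv) Walk.nil, by simp⟩
  constructor
  · apply le_antisymm
    · exact Nat.sInf_le mem2
    · have hNE : Set.Nonempty {k : ℕ | ∃ b : Fin k → Fin n, IsBurningSeq G b} := ⟨2, mem2⟩
      apply le_csInf hNE
      rintro k ⟨b, hb⟩
      by_contra hk
      push_neg at hk
      interval_cases k
      · obtain ⟨i, -⟩ := hb v0
        exact i.elim0
      · obtain ⟨i, w, hw⟩ := hb v0
        obtain ⟨j, w', hw'⟩ := hb v1
        have hw0 : w.length = 0 := by omega
        have hw'0 : w'.length = 0 := by omega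
        have h0 : v0 = b i := Walk.eq_of_length_eq_zero hw0
        have h1 : v1 = b j := Walk.eq_of_length_eq_zero hw'0
        have : i = j := Fin.ext (by omega)
        rw [this] at h0
        exact hne v0 v1 (by simp [hv0, hv1]) (h0.trans h1.symm)
  · -- line graph
    have h01 : v0 ≠ v1 := hne v0 v1 (by simp [hv0, hv1])
    set e₀ : G.edgeSet := ⟨s(v0, v1), h01⟩ with he₀
    have key : ∀ e : G.edgeSet, ∃ w : G.lineGraph.Walk e e₀, w.length ≤ 2 := by
      rintro ⟨s, hs⟩
      induction s using Sym2.inductionOn with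
      | hf a b =>
        have hab : a ≠ b := hs
        by_cases h0 : (⟨s(a,b), hs⟩ : G.edgeSet) = e₀
        · rw [h0]; exact ⟨Walk.nil, by simp⟩
        · by_cases hsh : (∃ v, v ∈ s(a,b) ∧ v ∈ (e₀ : Sym2 (Fin n)))
          · refine ⟨Walk.cons (show G.lineGraph.Adj _ e₀ from ⟨h0, ?_⟩) Walk.nil, by simp⟩
            obtain ⟨v, hv1', hv2'⟩ := hsh
            exact ⟨v, hv1', hv2'⟩
          · push_neg at hsh
            have ha0 : a ≠ v0 := by
              intro h; exact (hsh a (by simp)) (by simp [he₀, h])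
            have ha1 : a ≠ v1 := by
              intro h; exact (hsh a (by simp)) (by simp [he₀, h])
            have hb0 : b ≠ v0 := by
              intro h; exact (hsh b (by simp)) (by simp [he₀, h])
            set m : G.edgeSet := ⟨s(a, v0), ha0⟩ with hm
            have adj1 : G.lineGraph.Adj ⟨s(a,b), hs⟩ m := by
              constructor
              · intro h
                have h' : (s(a,b) : Sym2 (Fin n)) = s(a, v0) := congrArg Subtype.val h
                rw [Sym2.eq_iff] at h'
                rcases h' with ⟨-, h2⟩ | ⟨h1, -⟩
                · exact hb0 h2
                · exact ha0 h1
              · exact ⟨a, by simp, by simp [hm]⟩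
            have adj2 : G.lineGraph.Adj m e₀ := by
              constructor
              · intro h
                have h' : (s(a, v0) : Sym2 (Fin n)) = s(v0, v1) := congrArg Subtype.val h
                rw [Sym2.eq_iff] at h'
                rcases h' with ⟨h1, -⟩ | ⟨h1, -⟩
                · exact ha0 h1
                · exact ha1 h1
              · exact ⟨v0, by simp [hm], by simp [he₀]⟩
            exact ⟨Walk.cons adj1 (Walk.cons adj2 Walk.nil), by simp⟩
    have mem3 : ∃ b : Fin 3 → G.edgeSet, IsBurningSeq G.lineGraph b := by
      refine ⟨fun _ => e₀, fun e => ?_⟩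
      obtain ⟨w, hw⟩ := key e
      exact ⟨0, w, by simp; omega⟩
    apply le_antisymm
    · exact Nat.sInf_le mem3
    · have hNE : Set.Nonempty {k : ℕ | ∃ b : Fin k → G.edgeSet, IsBurningSeq G.lineGraph b} := ⟨3, mem3⟩
      apply le_csInf hNE
      rintro k ⟨b, hb⟩
      by_contra hk
      push_neg at hk
      interval_cases k
      · obtain ⟨i, -⟩ := hb e₀
        exact i.elim0
      · have h23 : v2 ≠ v3 := hne v2 v3 (by simp [hv2, hv3])
        obtain ⟨i, w, hw⟩ := hb e₀
        obtain ⟨j, w', hw'⟩ := hb ⟨s(v2, v3), h23⟩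
        have hw0 : w.length = 0 := by omega
        have hw'0 : w'.length = 0 := by omega
        have h0 : e₀ = b i := Walk.eq_of_length_eq_zero hw0
        have h1 : (⟨s(v2, v3), h23⟩ : G.edgeSet) = b j :=
          Walk.eq_of_length_eq_zero hw'0
        have hij : i = j := Fin.ext (by omega)
        rw [hij] at h0
        have heq := congrArg Subtype.val (h0.trans h1.symm)
        rw [he₀] at heq
        simp only [Sym2.eq_iff] at heq
        rcases heq with ⟨h1', -⟩ | ⟨h1', -⟩
        · exact hne v0 v2 (by simp [hv0, hv2]) h1'
        · exact hne v0 v3 (by simp [hv0, hv3]) h1'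
      · -- k = 2
        have main : ∀ x y : Fin n, ((b 0 : G.edgeSet) : Sym2 (Fin n)) = s(x, y) → False := by
          intro x y hxy
          -- pick three vertices c, d, e outside {x, y}
          set T : Finset (Fin n) := (Finset.univ : Finset (Fin n)) \ {x, y} with hT
          have hcard : 3 ≤ T.card := by
            rw [hT]
            have h2 : ({x, y} : Finset (Fin n)).card ≤ 2 :=
              (Finset.card_insert_le _ _).trans (by simp)
            have h3 := Finset.le_card_sdiff ({x, y} : Finset (Fin n)) Finset.univ
            simp only [Finset.card_univ, Fintype.card_fin] at h3
            omega
          obtain ⟨c, hc⟩ := Finset.card_pos.mp (by omega : 0 < T.card)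
          have hc2 : 0 < (T.erase c).card := by
            have := Finset.card_erase_of_mem hc; omega
          obtain ⟨d, hd⟩ := Finset.card_pos.mp hc2
          have hd2 : 0 < ((T.erase c).erase d).card := by
            have h1 := Finset.card_erase_of_mem hc
            have h4 := Finset.card_erase_of_mem hd
            omega
          obtain ⟨e, he⟩ := Finset.card_pos.mp hd2
          have hdc : d ≠ c := (Finset.mem_erase.mp hd).1
          have hed : e ≠ d := (Finset.mem_erase.mp he).1
          have hec : e ≠ c := (Finset.mem_erase.mp (Finset.mem_erase.mp he).2).1
          have hdT : d ∈ T := (Finset.mem_erase.mp hd).2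
          have heT : e ∈ T := (Finset.mem_erase.mp (Finset.mem_erase.mp he).2).2
          have hout : ∀ v ∈ T, v ≠ x ∧ v ≠ y := by
            intro v hv
            simp only [hT, Finset.mem_sdiff, Finset.mem_insert, Finset.mem_singleton] at hv
            exact ⟨fun h => hv.2 (Or.inl h), fun h => hv.2 (Or.inr h)⟩
          -- two candidate edges disjoint from b 0
          have hf12 : (s(c, d) : Sym2 (Fin n)) ≠ s(c, e) := by
            intro h
            rw [Sym2.eq_iff] at h
            rcases h with ⟨-, h2⟩ | ⟨h1, -⟩
            · exact hed h2.symm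
            · exact hec h1.symm
          -- a generic contradiction for any edge with both endpoints in T, distinct from b 1
          have contra : ∀ (p q : Fin n) (hpq : G.Adj p q), p ∈ T → q ∈ T →
              (⟨s(p, q), hpq⟩ : G.edgeSet) ≠ b 1 → False := by
            intro p q hpq hpT hqT hne1
            obtain ⟨i, w, hw⟩ := hb ⟨s(p, q), hpq⟩
            have hi : (i : ℕ) = 0 ∨ (i : ℕ) = 1 := by omega
            rcases hi with hi | hi
            · have hle : w.length ≤ 1 := by omega
              rcases walk_le_one w hle with heq | hadj'
              · -- equals b 0
                have h' := congrArg Subtype.val heq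
                rw [show (i : Fin 2) = 0 from Fin.ext hi, hxy] at h'
                rw [Sym2.eq_iff] at h'
                rcases h' with ⟨h1, -⟩ | ⟨h1, -⟩
                · exact (hout p hpT).1 h1
                · exact (hout p hpT).2 h1
              · obtain ⟨v, hv1, hv2⟩ := hadj'.2
                rw [show (i : Fin 2) = 0 from Fin.ext hi, hxy] at hv2
                simp only [SetLike.mem_coe, Sym2.mem_iff] at hv1 hv2
                rcases hv1 with hp1 | hp1
                · rcases hv2 with hp2 | hp2
                  · exact (hout p hpT).1 (hp1.symm.trans hp2)
                  · exact (hout p hpT).2 (hp1.symm.trans hp2)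
                · rcases hv2 with hp2 | hp2
                  · exact (hout q hqT).1 (hp1.symm.trans hp2)
                  · exact (hout q hqT).2 (hp1.symm.trans hp2)
            · have hw0 : w.length = 0 := by omega
              have := Walk.eq_of_length_eq_zero hw0
              rw [show (i : Fin 2) = 1 from Fin.ext hi] at this
              exact hne1 this
          by_cases hb1 : (⟨s(c, d), fun h => hdc h.symm⟩ : G.edgeSet) = b 1
          · refine contra c e (fun h => hec h.symm) hc heT fun h => ?_
            rw [← hb1] at h
            exact hf12 (congrArg Subtype.val h).symm
          · exact contra c d (fun h => hdc h.symm) hc hdT hb1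
        exact Sym2.inductionOn
          (f := fun s => ((b 0 : G.edgeSet) : Sym2 (Fin n)) = s → False)
          ((b 0 : G.edgeSet) : Sym2 (Fin n)) main rfl
end

section
/- For every integer r ≥ 2, the spider 𝔓_r, consisting of one center vertex with r legs attached, where each leg is a path with r − 1 edges from the center to a leaf, is P_{2r}-free; consequently, for every integer k ≥ 4, taking r = ⌊k/2⌋ gives a P_k-free graph whose burning number equals ⌊k/2⌋. -/
open SimpleGraph

/-- The spider `𝔓_r`: a center vertex (`none`) with `r` legs, each leg being a path with
`r - 1` edges from the center to a leaf; `some (i, j)` is the `(j + 1)`-st vertex along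
leg `i`, counted from the center. -/
def spider (r : ℕ) : SimpleGraph (Option (Fin r × Fin (r - 1))) :=
  SimpleGraph.fromRel (fun x y =>
    match x, y with
    | none, some (_, j) => (j : ℕ) = 0
    | some (i, j), some (i', j') => i = i' ∧ (j' : ℕ) = (j : ℕ) + 1
    | _, _ => False)

lemma spider_adj_elim {r : ℕ} {x y : Option (Fin r × Fin (r - 1))} (h : (spider r).Adj x y) :
    (∃ m j, x = none ∧ y = some (m, j) ∧ (j : ℕ) = 0) ∨
    (∃ m j, x = some (m, j) ∧ y = none ∧ (j : ℕ) = 0) ∨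
    (∃ m j j', x = some (m, j) ∧ y = some (m, j') ∧
      ((j' : ℕ) = (j : ℕ) + 1 ∨ (j : ℕ) = (j' : ℕ) + 1)) := by
  match x, y with
  | none, none => simp [spider, fromRel_adj] at h
  | none, some (m, j) =>
    simp only [spider, fromRel_adj] at h
    exact Or.inl ⟨m, j, rfl, rfl, by tauto⟩
  | some (m, j), none =>
    simp only [spider, fromRel_adj] at h
    exact Or.inr (Or.inl ⟨m, j, rfl, rfl, by tauto⟩)
  | some (m, j), some (m', j') =>
    simp only [spider, fromRel_adj] at h
    obtain ⟨-, h | h⟩ := h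
    · exact Or.inr (Or.inr ⟨m, j, j', rfl, by rw [h.1], Or.inl h.2⟩)
    · exact Or.inr (Or.inr ⟨m, j, j', rfl, by rw [h.1], Or.inr h.2⟩)

lemma spider_adj_none_some {r : ℕ} (m : Fin r) (j : Fin (r - 1)) (hj : (j : ℕ) = 0) :
    (spider r).Adj none (some (m, j)) := by
  rw [spider, fromRel_adj]
  exact ⟨by simp, Or.inl hj⟩

lemma spider_adj_some_some {r : ℕ} (m : Fin r) (j j' : Fin (r - 1))
    (hj : (j' : ℕ) = (j : ℕ) + 1) : (spider r).Adj (some (m, j)) (some (m, j')) := by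
  rw [spider, fromRel_adj]
  refine ⟨by simp [Prod.ext_iff]; omega, Or.inl ⟨rfl, hj⟩⟩

/-- Walk from `some (m, j)` to the center, of length `j + 1`. -/
def spiderToCenter (r : ℕ) (m : Fin r) : (j : ℕ) → (h : j < r - 1) →
    (spider r).Walk (some (m, ⟨j, h⟩)) none
  | 0, h => Walk.cons ((spider_adj_none_some m ⟨0, h⟩ rfl).symm) Walk.nil
  | j + 1, h =>
      Walk.cons ((spider_adj_some_some m ⟨j, by omega⟩ ⟨j + 1, h⟩ rfl).symm)
        (spiderToCenter r m j (by omega))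

lemma spiderToCenter_length (r : ℕ) (m : Fin r) : ∀ (j : ℕ) (h : j < r - 1),
    (spiderToCenter r m j h).length = j + 1
  | 0, h => by simp [spiderToCenter]
  | j + 1, h => by simp [spiderToCenter, spiderToCenter_length r m j]

/-- Potential: depth along leg `m`, zero elsewhere. -/
def spiderPhi {r : ℕ} (m : Fin r) : Option (Fin r × Fin (r - 1)) → ℕ
  | none => 0
  | some (m', j) => if m' = m then (j : ℕ) + 1 else 0

lemma spiderPhi_adj {r : ℕ} (m : Fin r) {x y : Option (Fin r × Fin (r - 1))}
    (h : (spider r).Adj x y) : spiderPhi m x ≤ spiderPhi m y + 1 := by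
  rcases spider_adj_elim h with ⟨m', j, hx, hy, hj⟩ | ⟨m', j, hx, hy, hj⟩ |
    ⟨m', j, j', hx, hy, hj⟩ <;> subst hx <;> subst hy <;> simp only [spiderPhi]
  · omega
  · split <;> omega
  · split <;> omega

lemma spiderPhi_walk {r : ℕ} (m : Fin r) {u v : Option (Fin r × Fin (r - 1))}
    (w : (spider r).Walk u v) : spiderPhi m u ≤ spiderPhi m v + w.length := by
  induction w with
  | nil => simp
  | cons h p ih =>
    have := spiderPhi_adj m h
    simp only [Walk.length_cons]
    omega

/-- If a chain of adjacent vertices avoids the center, it stays on one leg. -/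
lemma spider_leg_const {r n : ℕ} (g : ℕ → Option (Fin r × Fin (r - 1)))
    (hadj : ∀ i, i + 1 < n → (spider r).Adj (g i) (g (i + 1)))
    (a b : ℕ) (hb : b < n)
    (hnone : ∀ s, a ≤ s → s ≤ b → g s ≠ none)
    (m : Fin r) (j0 : Fin (r - 1)) (ha : g a = some (m, j0)) :
    ∀ s, a ≤ s → s ≤ b → ∃ j, g s = some (m, j) := by
  intro s hs hsb
  induction s, hs using Nat.le_induction with
  | base => exact ⟨j0, ha⟩
  | succ s hs ih =>
    obtain ⟨j, hj⟩ := ih (by omega)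
    have hadj' := hadj s (by omega)
    rw [hj] at hadj'
    rcases spider_adj_elim hadj' with ⟨m', j', hx, hy, -⟩ | ⟨m', j', hx, hy, -⟩ |
      ⟨m', j', j'', hx, hy, -⟩
    · exact absurd hx (by simp)
    · exact absurd hy (hnone (s + 1) (by omega) hsb)
    · have hm : m = m' ∧ j = j' := by
        have := Option.some_injective _ hx
        exact ⟨(Prod.mk.injEq _ _ _ _ ▸ this).1, (Prod.mk.injEq _ _ _ _ ▸ this).2⟩
      exact ⟨j'', by rw [hy, hm.1]⟩

/-- Counting bound for a center-free segment of a chain of distinct adjacent vertices. -/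
lemma spider_seg_bound {r n : ℕ} (hr : 2 ≤ r) (g : ℕ → Option (Fin r × Fin (r - 1)))
    (hadj : ∀ i, i + 1 < n → (spider r).Adj (g i) (g (i + 1)))
    (hinj : ∀ i j, i < n → j < n → g i = g j → i = j)
    (a b : ℕ) (hab : a ≤ b) (hb : b < n)
    (hnone : ∀ s, a ≤ s → s ≤ b → g s ≠ none) :
    b + 1 - a ≤ r - 1 := by
  obtain ⟨m, j0, ha⟩ : ∃ m j0, g a = some (m, j0) := by
    have := hnone a le_rfl hab
    cases hga : g a with
    | none => exact absurd hga this
    | some p => obtain ⟨p1, p2⟩ := p; exact ⟨p1, p2, rfl⟩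
  have hsome := spider_leg_const g hadj a b hb hnone m j0 ha
  have hcard : (Finset.Icc a b).card ≤ (Finset.univ : Finset (Fin (r - 1))).card := by
    apply Finset.card_le_card_of_injOn
      (fun s => if hm : ∃ j, g s = some (m, j) then hm.choose else ⟨0, by omega⟩)
    · intro s _; exact Finset.mem_univ _
    · intro s hs t ht hst
      simp only [Finset.mem_coe, Finset.mem_Icc] at hs ht
      have hs' := hsome s hs.1 hs.2
      have ht' := hsome t ht.1 ht.2
      simp only [dif_pos hs', dif_pos ht'] at hst
      have h1 := hs'.choose_spec
      have h2 := ht'.choose_spec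
      rw [hst] at h1
      exact hinj s t (by omega) (by omega) (h1.trans h2.symm)
  simpa [Nat.card_Icc] using hcard

lemma spider_pathFree (r : ℕ) (hr : 2 ≤ r) : IsEmpty (pathGraph (2 * r) ↪g spider r) := by
  constructor
  intro e
  set g : ℕ → Option (Fin r × Fin (r - 1)) :=
    fun i => if h : i < 2 * r then e ⟨i, h⟩ else none with hg
  have hadj : ∀ i, i + 1 < 2 * r → (spider r).Adj (g i) (g (i + 1)) := by
    intro i h
    have h' : i < 2 * r := by omega
    simp only [hg, dif_pos h, dif_pos h']
    exact e.map_rel_iff.2 (by simp [pathGraph_adj])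
  have hinj : ∀ i j, i < 2 * r → j < 2 * r → g i = g j → i = j := by
    intro i j hi hj hij
    simp only [hg, dif_pos hi, dif_pos hj] at hij
    exact congrArg Fin.val (e.injective hij)
  by_cases hc : ∃ t, t < 2 * r ∧ g t = none
  · obtain ⟨t, ht, htn⟩ := hc
    have h1 : 1 ≤ t → t - 1 + 1 - 0 ≤ r - 1 := by
      intro h1t
      apply spider_seg_bound hr g hadj hinj 0 (t - 1) (by omega) (by omega)
      intro s _ hsb hsn
      have := hinj s t (by omega) ht (hsn.trans htn.symm)
      omega
    have h2 : t + 1 ≤ 2 * r - 1 → (2 * r - 1) + 1 - (t + 1) ≤ r - 1 := by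
      intro h2t
      apply spider_seg_bound hr g hadj hinj (t + 1) (2 * r - 1) (by omega) (by omega)
      intro s hsa hsb hsn
      have := hinj s t (by omega) ht (hsn.trans htn.symm)
      omega
    omega
  · push_neg at hc
    have := spider_seg_bound hr g hadj hinj 0 (2 * r - 1) (by omega) (by omega)
      (fun s _ hsb => hc s (by omega))
    omega

lemma burningNumber_spider (r : ℕ) (hr : 2 ≤ r) : burningNumber (spider r) = r := by
  have hmem : r ∈ {k : ℕ | ∃ b : Fin k → Option (Fin r × Fin (r - 1)),
      IsBurningSeq (spider r) b} := by
    refine ⟨fun _ => none, fun v => ⟨⟨0, by omega⟩, ?_⟩⟩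
    match v with
    | none => exact ⟨Walk.nil, by simp only [Walk.length_nil]; omega⟩
    | some (m, ⟨jv, hj⟩) =>
      refine ⟨spiderToCenter r m jv hj, ?_⟩
      rw [spiderToCenter_length]
      simp only []
      omega
  apply le_antisymm (Nat.sInf_le hmem)
  apply le_csInf ⟨r, hmem⟩
  rintro k ⟨b, hb⟩
  by_contra hlt
  push_neg at hlt
  have hr2 : r - 2 < r - 1 := by omega
  have H : ∀ m : Fin r, ∃ i : Fin k,
      ∃ w : (spider r).Walk (some (m, ⟨r - 2, hr2⟩)) (b i), w.length + (i : ℕ) + 1 ≤ k :=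
    fun m => hb (some (m, ⟨r - 2, hr2⟩))
  choose ψ w hw using H
  have key : ∀ m, ∃ j, b (ψ m) = some (m, j) := by
    intro m
    have hphi := spiderPhi_walk m (w m)
    have h1 : spiderPhi m (some (m, (⟨r - 2, hr2⟩ : Fin (r - 1)))) = r - 1 := by
      simp only [spiderPhi, if_true, eq_self_iff_true, Fin.val_mk]
      omega
    rw [h1] at hphi
    have hwl := hw m
    have hpos : 0 < spiderPhi m (b (ψ m)) := by omega
    match hbv : b (ψ m) with
    | none => rw [hbv] at hpos; simp [spiderPhi] at hpos
    | some (m', j) =>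
      rw [hbv] at hpos
      simp only [spiderPhi] at hpos
      by_cases hmm : m' = m
      · exact ⟨j, by rw [hmm]⟩
      · rw [if_neg hmm] at hpos; omega
  have hinj : Function.Injective ψ := by
    intro m m' hmm
    obtain ⟨j, hj⟩ := key m
    obtain ⟨j', hj'⟩ := key m'
    rw [hmm, hj'] at hj
    exact ((Prod.mk.injEq _ _ _ _ ▸ Option.some_injective _ hj.symm).1)
  have := Fintype.card_le_of_injective ψ hinj
  simp only [Fintype.card_fin] at this
  omega

def pathGraphCast {a b : ℕ} (h : a ≤ b) : pathGraph a ↪g pathGraph b :=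
  ⟨⟨Fin.castLE h, Fin.castLE_injective h⟩, by intro u v; simp [pathGraph_adj]⟩

/-- For `r ≥ 2`, the spider `𝔓_r` is `P_{2r}`-free; consequently, for every `k ≥ 4`,
taking `r = ⌊k / 2⌋` gives a `P_k`-free graph whose burning number equals `⌊k / 2⌋`. -/
theorem spider_pathFree_and_burningNumber :
    (∀ r : ℕ, 2 ≤ r → IsEmpty (pathGraph (2 * r) ↪g spider r)) ∧
      (∀ k : ℕ, 4 ≤ k →
        IsEmpty (pathGraph k ↪g spider (k / 2)) ∧ burningNumber (spider (k / 2)) = k / 2) := by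
  refine ⟨spider_pathFree, fun k hk => ?_⟩
  have hr : 2 ≤ k / 2 := by omega
  refine ⟨⟨fun e => ?_⟩, burningNumber_spider _ hr⟩
  exact (spider_pathFree (k / 2) hr).false (e.comp (pathGraphCast (by omega)))
end
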